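/- arXiv:1707.01634 — 7 statements merged into one kernel-verified Lean document; each statement's English description precedes it below -/
import Mathlib

section
/- Let G be a connected graph of order n ≥ k², where k ≥ 3. If the minimum degree δ(G) ≥ (n−k+1)/k, then G has at most k−2 cut edges (bridges). -/
open SimpleGraph

/-- Degree of a vertex. -/
noncomputable def vdeg {V : Type*} (G : SimpleGraph V) (v : V) : ℕ := (G.neighborSet v).ncard

/-- An edge-coloring `c` makes `G` conflict-free connected if any two distinct vertices are
joined by a path on which some color appears on exactly one edge. -/
def IsCFConnected {V : Type*} (G : SimpleGraph V) (c : Sym2 V → ℕ) : Prop :=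
  ∀ u v : V, u ≠ v → ∃ p : G.Walk u v, p.IsPath ∧
    ∃ col : ℕ, (p.edges.filter (fun e => c e = col)).length = 1

/-- The conflict-free connection number of `G`. -/
noncomputable def cfcNum {V : Type*} (G : SimpleGraph V) : ℕ :=
  sInf {k | ∃ c : Sym2 V → ℕ, (∀ e ∈ G.edgeSet, c e < k) ∧ IsCFConnected G c}

/-- The subgraph `C(G)` spanned by the cut edges (bridges) of `G`. -/
def bridgeGraph {V : Type*} (G : SimpleGraph V) : SimpleGraph V :=
  SimpleGraph.fromEdgeSet {e | G.IsBridge e}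

/-- A linear forest: an acyclic graph with maximum degree at most two. -/
def IsLinearForest {V : Type*} (H : SimpleGraph V) : Prop :=
  H.IsAcyclic ∧ ∀ v, (H.neighborSet v).ncard ≤ 2

private lemma walk_del {V : Type*} (G' : SimpleGraph V) (x' y' : V) {a b : V}
    (W : G'.Walk a b) :
    (G' \ fromEdgeSet {s(x', y')}).Reachable a b ∨
    (G' \ fromEdgeSet {s(x', y')}).Reachable x' b ∨
    (G' \ fromEdgeSet {s(x', y')}).Reachable y' b := by
  induction W with
  | nil => exact Or.inl (Reachable.refl _)
  | @cons u v w h p ih =>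
    rcases ih with h1 | h2 | h3
    · by_cases he : s(u, v) = s(x', y')
      · rw [Sym2.eq_iff] at he
        rcases he with ⟨rfl, rfl⟩ | ⟨rfl, rfl⟩
        · exact Or.inr (Or.inr h1)
        · exact Or.inr (Or.inl h1)
      · refine Or.inl (Reachable.trans ⟨Walk.cons ?_ Walk.nil⟩ h1)
        refine ⟨h, ?_⟩
        rw [fromEdgeSet_adj]
        rintro ⟨hmem, -⟩
        exact he (by simpa using hmem)
    · exact Or.inr (Or.inl h2)
    · exact Or.inr (Or.inr h3)


theorem stmt_0 {V : Type*} [Fintype V] (G : SimpleGraph V) (k : ℕ) (hk : 3 ≤ k)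
    (hn : k ^ 2 ≤ Fintype.card V) (hG : G.Connected)
    (hδ : ∀ v, ((Fintype.card V : ℚ) - k + 1) / k ≤ (vdeg G v : ℚ)) :
    {e : Sym2 V | G.IsBridge e}.ncard ≤ k - 2 := by
  classical
  set n := Fintype.card V with hn'
  set B : Set (Sym2 V) := {e : Sym2 V | G.IsBridge e} with hB
  set BG : SimpleGraph V := bridgeGraph G with hBG
  set H : SimpleGraph V := G \ BG with hH
  have hkQ : (0:ℚ) < (k:ℚ) := by positivity
  -- degree facts
  have hdeg : ∀ v, n + 1 ≤ k * (vdeg G v + 1) := by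
    intro v
    have h := hδ v
    rw [div_le_iff₀ hkQ] at h
    have h2 : (n : ℚ) + 1 ≤ ((vdeg G v + 1) * k : ℕ) := by push_cast; linarith
    have h3 : n + 1 ≤ (vdeg G v + 1) * k := by exact_mod_cast h2
    rw [mul_comm]; exact h3
  have hdegk : ∀ v, k ≤ vdeg G v := by
    intro v
    have h1 := hdeg v
    have h2 : k * k < k * (vdeg G v + 1) := by
      have : k * k = k ^ 2 := (sq k).symm
      omega
    have := Nat.lt_of_mul_lt_mul_left h2
    omega
  -- adjacency characterizations
  have hBGadj : ∀ v w : V, BG.Adj v w ↔ G.IsBridge s(v, w) := by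
    intro v w
    rw [hBG, bridgeGraph, fromEdgeSet_adj]
    constructor
    · exact fun h => h.1
    · intro hb
      exact ⟨hb, (hb.reachable_iff_adj.mp (hG.preconnected v w)).ne⟩
  have hHadj : ∀ v w : V, H.Adj v w ↔ G.Adj v w ∧ ¬G.IsBridge s(v, w) := by
    intro v w
    rw [hH, sdiff_adj, hBGadj]
  -- H is a subgraph of G minus any single bridge
  have hHle : ∀ e ∈ B, H ≤ G \ fromEdgeSet {e} := by
    intro e he v w hvw
    rw [hHadj] at hvw
    refine ⟨hvw.1, ?_⟩
    rw [fromEdgeSet_adj]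
    rintro ⟨hmem, -⟩
    rw [Set.mem_singleton_iff] at hmem
    exact hvw.2 (hmem ▸ he)
  -- components of H
  haveI : Fintype H.ConnectedComponent := Fintype.ofFinite _
  set cmp : V → H.ConnectedComponent := H.connectedComponentMk with hcmp
  set F : H.ConnectedComponent → Finset V :=
    fun C => Finset.univ.filter (fun v => cmp v = C) with hF
  set c : H.ConnectedComponent → ℕ := fun C => (F C).card with hc
  set bdeg : V → ℕ := fun v => (BG.neighborSet v).ncard with hbdeg
  set d : H.ConnectedComponent → ℕ := fun C => ∑ v ∈ F C, bdeg v with hd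
  set N : ℕ := Fintype.card H.ConnectedComponent with hN
  set m : ℕ := BG.edgeFinset.card with hm
  -- bridge bookkeeping
  have hBedge : BG.edgeSet = B := by
    rw [hBG, bridgeGraph, edgeSet_fromEdgeSet]
    ext e
    rw [hB]
    simp only [Set.mem_diff, Set.mem_setOf_eq, Sym2.mem_diagSet, and_iff_left_iff_imp]
    intro he
    exact G.not_isDiag_of_mem_edgeSet (by
      induction e using Sym2.ind with
      | _ x y => exact he.reachable_iff_adj.mp (hG.preconnected x y))
  have hBm : B.ncard = m := by
    rw [hm, ← hBedge, ← Set.ncard_coe_finset, coe_edgeFinset]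
  have hbdeg_deg : ∀ v, bdeg v = BG.degree v := by
    intro v
    rw [hbdeg]
    calc (BG.neighborSet v).ncard = Nat.card (BG.neighborSet v) :=
          (Nat.card_coe_set_eq _).symm
      _ = Fintype.card (BG.neighborSet v) := Nat.card_eq_fintype_card
      _ = BG.degree v := BG.card_neighborSet_eq_degree v
  have hsum_bdeg : ∑ v, bdeg v = 2 * m := by
    rw [hm]
    rw [show (∑ v, bdeg v) = ∑ v, BG.degree v from Finset.sum_congr rfl fun v _ => hbdeg_deg v]
    exact BG.sum_degrees_eq_twice_card_edges
  -- fiberwise sums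
  have hsum_c : ∑ C, c C = n := by
    rw [hn']
    exact (Finset.card_eq_sum_card_fiberwise (fun x _ => Finset.mem_univ (cmp x))).symm
  have hsum_d : ∑ C, d C = 2 * m := by
    rw [← hsum_bdeg]
    exact Finset.sum_fiberwise_of_maps_to (fun x _ => Finset.mem_univ (cmp x)) bdeg
  -- per-vertex degree bound
  have hkey : ∀ v : V, vdeg G v + 1 ≤ c (cmp v) + bdeg v := by
    intro v
    have hvmem : v ∈ (F (cmp v) : Set V) := by
      simp [hF]
    have hsub : G.neighborSet v ⊆ ((F (cmp v) : Set V) \ {v}) ∪ BG.neighborSet v := by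
      intro w hw
      rw [mem_neighborSet] at hw
      by_cases hb : G.IsBridge s(v, w)
      · exact Or.inr ((hBGadj v w).mpr hb)
      · left
        have hH' : H.Adj v w := (hHadj v w).mpr ⟨hw, hb⟩
        constructor
        · simp only [hF, Finset.coe_filter, Set.mem_setOf_eq]
          exact ⟨Finset.mem_univ w, (ConnectedComponent.connectedComponentMk_eq_of_adj hH').symm⟩
        · exact fun hwv => hw.ne' (by simpa using hwv)
    have h1 : vdeg G v ≤ ((F (cmp v) : Set V) \ {v}).ncard + bdeg v :=
      le_trans (Set.ncard_le_ncard hsub (Set.toFinite _)) (Set.ncard_union_le _ _)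
    have h2 : ((F (cmp v) : Set V) \ {v}).ncard + 1 = c (cmp v) := by
      rw [Set.ncard_diff_singleton_add_one hvmem, Set.ncard_coe_finset]
    omega
  -- contradiction setup
  by_contra hcon
  push_neg at hcon
  have hmk : k - 1 ≤ m := by omega
  have hm1 : 1 ≤ m := by omega
  -- every component meets a bridge endpoint
  have hd1 : ∀ C, 1 ≤ d C := by
    intro C
    by_contra hd0
    push_neg at hd0
    have hd0' : d C = 0 := by omega
    have hall : ∀ v, cmp v = C → bdeg v = 0 := by
      intro v hv
      have hvF : v ∈ F C := by simp [hF, hv]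
      have := Finset.sum_eq_zero_iff.mp hd0' v hvF
      exact this
    -- get a bridge endpoint
    obtain ⟨e, hne⟩ : ∃ e, e ∈ BG.edgeFinset :=
      Finset.card_pos.mp (show 0 < BG.edgeFinset.card by omega)
    have heB : G.IsBridge e := by
      have := mem_edgeFinset.mp hne
      rw [hBedge] at this
      exact this
    obtain ⟨x0, y0, rfl⟩ : ∃ x y, e = s(x, y) := Sym2.ind (fun x y => ⟨x, y, rfl⟩) e
    have hbx0 : 1 ≤ bdeg x0 := by
      have hadj : BG.Adj x0 y0 := (hBGadj x0 y0).mpr heB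
      have : y0 ∈ BG.neighborSet x0 := hadj
      have hpos := Set.ncard_pos (Set.toFinite _) |>.mpr ⟨y0, this⟩
      exact hpos
    obtain ⟨v, hv⟩ := C.exists_rep
    have claim : ∀ (a b : V) (W : G.Walk a b), cmp a = C → cmp b = C := by
      intro a b W
      induction W with
      | nil => exact id
      | @cons u v' w h p ih =>
        intro hu
        have hb0 : bdeg u = 0 := hall u hu
        have hnb : ¬G.IsBridge s(u, v') := by
          intro hbr
          have hadj : BG.Adj u v' := (hBGadj u v').mpr hbr
          have : (BG.neighborSet u).Nonempty := ⟨v', hadj⟩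
          have := Set.ncard_pos (Set.toFinite _) |>.mpr this
          simp only [hbdeg] at hb0
          omega
        have hH' : H.Adj u v' := (hHadj u v').mpr ⟨h, hnb⟩
        exact ih (hu ▸ (ConnectedComponent.connectedComponentMk_eq_of_adj hH').symm)
    have hx0C : cmp x0 = C := claim v x0 ((hG.preconnected v x0).some) hv
    have : bdeg x0 = 0 := hall x0 hx0C
    omega
  -- dichotomy: big or many bridge ends
  have hdich : ∀ C, (n + 1 ≤ k * c C) ∨ k ≤ d C := by
    intro C
    by_cases hex : ∃ v, cmp v = C ∧ bdeg v = 0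
    · left
      obtain ⟨v, hvC, hv0⟩ := hex
      have hvmem : v ∈ (F C : Set V) := by simp [hF, hvC]
      have hsub : G.neighborSet v ⊆ ((F C : Set V) \ {v}) := by
        intro w hw
        rw [mem_neighborSet] at hw
        have hnb : ¬G.IsBridge s(v, w) := by
          intro hbr
          have hadj : BG.Adj v w := (hBGadj v w).mpr hbr
          have : (BG.neighborSet v).Nonempty := ⟨w, hadj⟩
          have := Set.ncard_pos (Set.toFinite _) |>.mpr this
          simp only [hbdeg] at hv0
          omega
        have hH' : H.Adj v w := (hHadj v w).mpr ⟨hw, hnb⟩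
        constructor
        · simp only [hF, Finset.coe_filter, Set.mem_setOf_eq]
          exact ⟨Finset.mem_univ w,
            hvC ▸ (ConnectedComponent.connectedComponentMk_eq_of_adj hH').symm⟩
        · exact fun hwv => hw.ne' (by simpa using hwv)
      have h1 : vdeg G v ≤ ((F C : Set V) \ {v}).ncard :=
        Set.ncard_le_ncard hsub (Set.toFinite _)
      have h2 : ((F C : Set V) \ {v}).ncard + 1 = c C := by
        rw [Set.ncard_diff_singleton_add_one hvmem, Set.ncard_coe_finset]
      have h3 : vdeg G v + 1 ≤ c C := by omega
      calc n + 1 ≤ k * (vdeg G v + 1) := hdeg v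
        _ ≤ k * c C := Nat.mul_le_mul_left k h3
    · right
      push_neg at hex
      have hge1 : ∀ v ∈ F C, 1 ≤ bdeg v := by
        intro v hvF
        have hvC : cmp v = C := by simpa [hF] using hvF
        have := hex v hvC
        omega
      have hcpos : 1 ≤ c C := by
        obtain ⟨v, hv⟩ := C.exists_rep
        have hv' : cmp v = C := hv
        have : v ∈ F C := by simp [hF, hv']
        exact Finset.card_pos.mpr ⟨v, this⟩
      by_cases hck : k ≤ c C
      · calc k ≤ c C := hck
          _ = ∑ _v ∈ F C, 1 := by rw [hc]; simp
          _ ≤ d C := Finset.sum_le_sum hge1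
      · push_neg at hck
        have hbv : ∀ v ∈ F C, k + 1 - c C ≤ bdeg v := by
          intro v hvF
          have hvC : cmp v = C := by simpa [hF] using hvF
          have h1 := hkey v
          have h2 := hdegk v
          rw [hvC] at h1
          omega
        have hdC : c C * (k + 1 - c C) ≤ d C := by
          calc c C * (k + 1 - c C) = ∑ _v ∈ F C, (k + 1 - c C) := by
                rw [Finset.sum_const, smul_eq_mul, hc]
            _ ≤ d C := Finset.sum_le_sum hbv
        have hfin : k ≤ c C * (k + 1 - c C) := by
          obtain ⟨a, ha⟩ : ∃ a, c C = a + 1 := ⟨c C - 1, by omega⟩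
          obtain ⟨b, hb⟩ : ∃ b, k + 1 - c C = b + 1 := ⟨k - c C, by omega⟩
          have hab : a + b + 1 = k := by omega
          calc k = a + b + 1 := hab.symm
            _ ≤ a * b + (a + b + 1) := Nat.le_add_left _ _
            _ = (a + 1) * (b + 1) := by ring
            _ = c C * (k + 1 - c C) := by rw [hb, ha]
        omega
  -- number of big components
  set t : ℕ := (Finset.univ.filter (fun C => n + 1 ≤ k * c C)).card with ht
  set sSmall : ℕ := (Finset.univ.filter (fun C => ¬(n + 1 ≤ k * c C))).card with hsS
  have hts : t + sSmall = N := by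
    rw [ht, hsS, hN, Finset.card_filter_add_card_filter_not]
    exact Finset.card_univ
  have htk : t + 1 ≤ k := by
    have h1 : t * (n + 1) ≤ ∑ C ∈ Finset.univ.filter (fun C => n + 1 ≤ k * c C), k * c C := by
      calc t * (n + 1) = ∑ _C ∈ Finset.univ.filter (fun C => n + 1 ≤ k * c C), (n + 1) := by
            rw [Finset.sum_const, smul_eq_mul, ht]
        _ ≤ _ := Finset.sum_le_sum (fun C hC => (Finset.mem_filter.mp hC).2)
    have h2 : ∑ C ∈ Finset.univ.filter (fun C => n + 1 ≤ k * c C), k * c C ≤ ∑ C, k * c C :=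
      Finset.sum_le_sum_of_subset (Finset.filter_subset _ _)
    have h3 : ∑ C, k * c C = k * n := by rw [← Finset.mul_sum, hsum_c]
    by_contra hcon2
    push_neg at hcon2
    have hkt : k ≤ t := by omega
    have h4 : k * (n + 1) ≤ t * (n + 1) := Nat.mul_le_mul_right _ hkt
    have h5 : k * (n + 1) ≤ k * n := le_trans h4 (le_trans h1 (h3 ▸ h2))
    have h6 : n + 1 ≤ n := Nat.le_of_mul_le_mul_left h5 (by omega)
    omega
  -- sum of d over components
  have h2m : t + k * sSmall ≤ 2 * m := by
    have hsplit := Finset.sum_filter_add_sum_filter_not Finset.univ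
      (fun C => n + 1 ≤ k * c C) d
    have hbig : t ≤ ∑ C ∈ Finset.univ.filter (fun C => n + 1 ≤ k * c C), d C := by
      calc t = ∑ _C ∈ Finset.univ.filter (fun C => n + 1 ≤ k * c C), 1 := by
            rw [Finset.sum_const, smul_eq_mul, ht, mul_one]
        _ ≤ _ := Finset.sum_le_sum (fun C _ => hd1 C)
    have hsmall : k * sSmall ≤
        ∑ C ∈ Finset.univ.filter (fun C => ¬(n + 1 ≤ k * c C)), d C := by
      calc k * sSmall = ∑ _C ∈ Finset.univ.filter (fun C => ¬(n + 1 ≤ k * c C)), k := by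
            rw [Finset.sum_const, smul_eq_mul, hsS, mul_comm]
        _ ≤ _ := Finset.sum_le_sum (fun C hC => by
            have := (Finset.mem_filter.mp hC).2
            rcases hdich C with h | h
            · exact absurd h this
            · exact h)
    calc t + k * sSmall ≤ _ + _ := Nat.add_le_add hbig hsmall
      _ = ∑ C, d C := hsplit
      _ = 2 * m := hsum_d
  -- the injection from bridges into non-root components
  have hV : Nonempty V := by
    have hkk : k * k ≤ n := le_trans (le_of_eq (sq k).symm) hn
    have h9 : 3 * 3 ≤ k * k := Nat.mul_le_mul hk hk
    rw [← Fintype.card_pos_iff, ← hn']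
    omega
  obtain ⟨r⟩ := hV
  have hPex : ∀ e ∈ BG.edgeFinset, ∃ p : V × V, e = s(p.1, p.2) ∧ G.Adj p.1 p.2 ∧
      ¬(G \ fromEdgeSet {e}).Reachable p.1 r ∧ (G \ fromEdgeSet {e}).Reachable p.2 r := by
    intro e he
    have heB : G.IsBridge e := by
      have := mem_edgeFinset.mp he
      rw [hBedge] at this
      exact this
    clear he
    induction e using Sym2.ind with
    | _ x y =>
      have hnr := isBridge_iff.mp heB
      have hadj := heB.reachable_iff_adj.mp (hG.preconnected x y)
      rcases walk_del G x y ((hG.preconnected x r).some) with h1 | h1 | h3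
      · have hy : ¬(G \ fromEdgeSet {s(x, y)}).Reachable y r := fun hy => hnr (h1.trans hy.symm)
        exact ⟨(y, x), Sym2.eq_swap.symm, hadj.symm, hy, h1⟩
      · have hy : ¬(G \ fromEdgeSet {s(x, y)}).Reachable y r := fun hy => hnr (h1.trans hy.symm)
        exact ⟨(y, x), Sym2.eq_swap.symm, hadj.symm, hy, h1⟩
      · have hx : ¬(G \ fromEdgeSet {s(x, y)}).Reachable x r := fun hx => hnr (hx.trans h3.symm)
        exact ⟨(x, y), rfl, hadj, hx, h3⟩
  set f : Sym2 V → H.ConnectedComponent := fun e =>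
    if h : ∃ p : V × V, e = s(p.1, p.2) ∧ G.Adj p.1 p.2 ∧
        ¬(G \ fromEdgeSet {e}).Reachable p.1 r ∧ (G \ fromEdgeSet {e}).Reachable p.2 r
    then cmp h.choose.1 else cmp r with hf
  have hspec : ∀ e ∈ BG.edgeFinset, ∃ x y : V, f e = cmp x ∧ e = s(x, y) ∧ G.Adj x y ∧
      ¬(G \ fromEdgeSet {e}).Reachable x r ∧ (G \ fromEdgeSet {e}).Reachable y r := by
    intro e he
    have h := hPex e he
    obtain ⟨h1, h2, h3, h4⟩ := h.choose_spec
    refine ⟨h.choose.1, h.choose.2, ?_, h1, h2, h3, h4⟩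
    rw [hf]
    exact dif_pos h
  have heBmem : ∀ e ∈ BG.edgeFinset, e ∈ B := by
    intro e he
    have := mem_edgeFinset.mp he
    rw [hBedge] at this
    exact this
  have hmaps : ∀ e ∈ BG.edgeFinset, f e ∈ Finset.univ.filter (fun C => ¬C = cmp r) := by
    intro e he
    obtain ⟨x, y, hfx, -, -, hxr, -⟩ := hspec e he
    rw [Finset.mem_filter]
    refine ⟨Finset.mem_univ _, ?_⟩
    rw [hfx]
    intro hcx
    have hreach : H.Reachable x r := ConnectedComponent.exact hcx
    exact hxr (hreach.mono (hHle e (heBmem e he)))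
  have hinjOn : Set.InjOn f BG.edgeFinset := by
    intro e he e' he' hfe
    by_contra hne
    obtain ⟨x, y, hfx, hexy, hadj, hxr, hyr⟩ := hspec e he
    obtain ⟨x', y', hfx', hexy', hadj', hxr', hyr'⟩ := hspec e' he'
    have hxx' : H.Reachable x x' := by
      have hcc : cmp x = cmp x' := by rw [← hfx, ← hfx']; exact hfe
      exact ConnectedComponent.exact hcc
    have hle1 : (G \ fromEdgeSet {e}) \ fromEdgeSet {e'} ≤ G \ fromEdgeSet {e} := sdiff_le
    have hle2 : (G \ fromEdgeSet {e}) \ fromEdgeSet {e'} ≤ G \ fromEdgeSet {e'} := by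
      intro a b hab
      exact ⟨hab.1.1, hab.2⟩
    have hGeadj : (G \ fromEdgeSet {e}).Adj x' y' := by
      refine ⟨hadj', ?_⟩
      rw [fromEdgeSet_adj]
      rintro ⟨hmem, -⟩
      rw [Set.mem_singleton_iff, ← hexy'] at hmem
      exact hne hmem.symm
    have hGe'adj : (G \ fromEdgeSet {e'}).Adj x y := by
      refine ⟨hadj, ?_⟩
      rw [fromEdgeSet_adj]
      rintro ⟨hmem, -⟩
      rw [Set.mem_singleton_iff, ← hexy] at hmem
      exact hne hmem
    have hxx'e : (G \ fromEdgeSet {e}).Reachable x x' := hxx'.mono (hHle e (heBmem e he))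
    have hxx'e' : (G \ fromEdgeSet {e'}).Reachable x x' := hxx'.mono (hHle e' (heBmem e' he'))
    obtain ⟨W⟩ := hyr
    have hcases := walk_del (G \ fromEdgeSet {e}) x' y' W
    rw [← hexy'] at hcases
    rcases hcases with h1 | h2 | h3
    · exact hxr' (((hxx'e'.symm.trans (hGe'adj.reachable)).trans (h1.mono hle2)))
    · exact hxr (hxx'e.trans (h2.mono hle1))
    · exact hxr ((hxx'e.trans (hGeadj.reachable.trans (h3.mono hle1))))
  have hinj := Finset.card_le_card_of_injOn f hmaps hinjOn
  have hone : (Finset.univ.filter (fun C => C = cmp r)).card = 1 := by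
    rw [show Finset.univ.filter (fun C => C = cmp r) = {cmp r} from by ext C; simp]
    exact Finset.card_singleton _
  have hNsplit : (Finset.univ.filter (fun C => C = cmp r)).card
      + (Finset.univ.filter (fun C => ¬C = cmp r)).card = N := by
    rw [hN, Finset.card_filter_add_card_filter_not]
    exact Finset.card_univ
  have hmN : m + 1 ≤ N := by omega
  -- final arithmetic
  have hs1 : 1 ≤ sSmall := by omega
  obtain ⟨P, hPdef⟩ : ∃ P, P = (k - 2) * sSmall := ⟨_, rfl⟩
  have hPk : k - 2 ≤ P := by
    rw [hPdef]
    exact Nat.le_mul_of_pos_right _ (by omega)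
  have hks : k * sSmall = P + 2 * sSmall := by
    rw [hPdef]
    have h2k : k - 2 + 2 = k := by omega
    calc k * sSmall = (k - 2 + 2) * sSmall := by rw [h2k]
      _ = (k - 2) * sSmall + 2 * sSmall := Nat.add_mul _ _ _
  rw [hks] at h2m
  clear hPdef
  omega
end

section
/- For every k ≥ 3 and t ≥ 3 there exists a connected graph H on n = k·t vertices with minimum degree δ(H) = (n−k)/k which has exactly k−1 cut edges. (Construction: take a path on k vertices and attach a complete graph K_t to each vertex of the path, identifying one vertex of each K_t with a path vertex.) -/
open SimpleGraph

section Construction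

lemma reach_invariant {V : Type*} {H : SimpleGraph V} (P : V → Prop)
    (h : ∀ a b, H.Adj a b → (P a ↔ P b)) {u v : V} (hr : H.Reachable u v) : P u ↔ P v := by
  obtain ⟨p⟩ := hr
  induction p with
  | nil => rfl
  | cons ha _ ih => exact (h _ _ ha).trans ih

variable (k t : ℕ) [NeZero t]

/-- The graph: `k` copies of `K_t`, each attached at its `0` vertex to a path on the `0`s. -/
def HG : SimpleGraph (Fin k × Fin t) :=
  SimpleGraph.fromRel (fun x y => x.1 = y.1 ∨ (x.2 = 0 ∧ y.2 = 0 ∧ (y.1 : ℕ) = (x.1 : ℕ) + 1))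

lemma hg_adj {x y : Fin k × Fin t} : (HG k t).Adj x y ↔ x ≠ y ∧
    (x.1 = y.1 ∨ (x.2 = 0 ∧ y.2 = 0 ∧ ((y.1 : ℕ) = (x.1 : ℕ) + 1 ∨ (x.1 : ℕ) = (y.1 : ℕ) + 1))) := by
  rw [HG, SimpleGraph.fromRel_adj]
  constructor
  · rintro ⟨hne, h⟩
    refine ⟨hne, ?_⟩
    rcases h with (h | ⟨h1, h2, h3⟩) | (h | ⟨h1, h2, h3⟩) <;> tauto
  · rintro ⟨hne, (h | ⟨h1, h2, (h3 | h3)⟩)⟩ <;> [exact ⟨hne, Or.inl (Or.inl h)⟩;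
      exact ⟨hne, Or.inl (Or.inr ⟨h1, h2, h3⟩)⟩; exact ⟨hne, Or.inr (Or.inr ⟨h2, h1, h3⟩)⟩]

lemma clique_adj {i : Fin k} {a b : Fin t} (hab : a ≠ b) : (HG k t).Adj (i, a) (i, b) := by
  rw [hg_adj]
  exact ⟨by simp [hab], Or.inl rfl⟩

/-- Every vertex has the "clique" neighbours. -/
lemma deg_lower (v : Fin k × Fin t) : t - 1 ≤ vdeg (HG k t) v := by
  have hsub : (fun b => (v.1, b)) '' {b | b ≠ v.2} ⊆ (HG k t).neighborSet v := by
    rintro _ ⟨b, hb, rfl⟩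
    exact clique_adj k t (Ne.symm hb)
  have hinj : Function.Injective (fun b : Fin t => (v.1, b)) := by
    intro a b hab; simpa using hab
  have hcard : ((fun b => (v.1, b)) '' {b | b ≠ v.2}).ncard = t - 1 := by
    rw [Set.ncard_image_of_injective _ hinj]
    have : {b : Fin t | b ≠ v.2} = ({v.2} : Set (Fin t))ᶜ := rfl
    rw [this]
    have h2 := Set.ncard_add_ncard_compl ({v.2} : Set (Fin t))
    rw [Set.ncard_singleton, Nat.card_eq_fintype_card, Fintype.card_fin] at h2
    omega
  calc t - 1 = ((fun b => (v.1, b)) '' {b | b ≠ v.2}).ncard := hcard.symm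
    _ ≤ vdeg (HG k t) v := Set.ncard_le_ncard hsub (Set.toFinite _)

lemma deg_exact {i : Fin k} {a : Fin t} (ha : a ≠ 0) : vdeg (HG k t) (i, a) = t - 1 := by
  have heq : (HG k t).neighborSet (i, a) = (fun b => (i, b)) '' {b | b ≠ a} := by
    ext ⟨j, b⟩
    simp only [mem_neighborSet, hg_adj, Set.mem_image, Set.mem_setOf_eq]
    constructor
    · rintro ⟨hne, (h | ⟨h1, _, _⟩)⟩
      · refine ⟨b, ?_, by rw [show i = j from h]⟩
        rintro rfl
        exact hne (by rw [show i = j from h])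
      · exact absurd h1 ha
    · rintro ⟨c, hc, h⟩
      obtain ⟨rfl, rfl⟩ := Prod.mk.injEq .. ▸ h
      exact ⟨by simp [Ne.symm hc], Or.inl rfl⟩
  have hinj : Function.Injective (fun b : Fin t => (i, b)) := by
    intro a b hab; simpa using hab
  rw [vdeg, heq, Set.ncard_image_of_injective _ hinj]
  have : {b : Fin t | b ≠ a} = ({a} : Set (Fin t))ᶜ := rfl
  rw [this]
  have h2 := Set.ncard_add_ncard_compl ({a} : Set (Fin t))
  rw [Set.ncard_singleton, Nat.card_eq_fintype_card, Fintype.card_fin] at h2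
  omega

lemma hg_connected (hk : 0 < k) : (HG k t).Connected := by
  have h0 : (0 : ℕ) < k := hk
  rw [connected_iff]
  refine ⟨fun x y => ?_, ⟨(⟨0, h0⟩, 0)⟩⟩
  have key : ∀ (m : ℕ) (hm : m < k), (HG k t).Reachable (⟨m, hm⟩, 0) (⟨0, h0⟩, 0) := by
    intro m
    induction m with
    | zero => intro hm; rfl
    | succ n ih =>
      intro hm
      have hn : n < k := by omega
      refine Reachable.trans ?_ (ih hn)
      have hadj : (HG k t).Adj (⟨n, hn⟩, 0) (⟨n + 1, hm⟩, 0) := by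
        rw [hg_adj]
        exact ⟨by simp [Prod.ext_iff, Fin.ext_iff], Or.inr ⟨rfl, rfl, Or.inl rfl⟩⟩
      exact hadj.symm.reachable
  have step : ∀ z : Fin k × Fin t, (HG k t).Reachable z (⟨0, h0⟩, 0) := by
    rintro ⟨i, a⟩
    by_cases ha : a = 0
    · subst ha; exact key i.1 i.2
    · exact Reachable.trans (clique_adj k t ha).reachable (key i.1 i.2)
  exact (step x).trans (step y).symm

/-- Clique edges are not bridges. -/
lemma clique_not_bridge (ht : 3 ≤ t) {i : Fin k} {a b : Fin t} (hab : a ≠ b) :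
    ¬ (HG k t).IsBridge s((i, a), (i, b)) := by
  rw [isBridge_iff]
  intro hnr
  obtain ⟨c, hca, hcb⟩ : ∃ c : Fin t, c ≠ a ∧ c ≠ b := by
    by_contra h
    push_neg at h
    have hsub : (Finset.univ : Finset (Fin t)) ⊆ {a, b} := by
      intro c _
      rcases Classical.em (c = a) with rfl | hc
      · simp
      · simp [h c hc]
    have hcard := Finset.card_le_card hsub
    have hle : ({a, b} : Finset (Fin t)).card ≤ 2 := Finset.card_insert_le _ _ |>.trans (by simp)
    simp only [Finset.card_univ, Fintype.card_fin] at hcard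
    omega
  apply hnr
  have hadj : ∀ (x y : Fin t), x ≠ y → s((i, x), (i, y)) ≠ s((i, a), (i, b)) →
      ((HG k t) \ fromEdgeSet {s((i, a), (i, b))}).Adj (i, x) (i, y) := by
    intro x y hxy hne
    rw [sdiff_adj, fromEdgeSet_adj]
    exact ⟨clique_adj k t hxy, by simp [hne]⟩
  have h1 : s((i, a), (i, c)) ≠ s((i, a), (i, b)) := by
    intro h
    rw [Sym2.eq_iff] at h
    rcases h with ⟨-, h⟩ | ⟨h, -⟩
    · exact hcb (by simpa using congrArg Prod.snd h)
    · exact hab (by simpa using congrArg Prod.snd h)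
  have h2 : s((i, c), (i, b)) ≠ s((i, a), (i, b)) := by
    intro h
    rw [Sym2.eq_iff] at h
    rcases h with ⟨h, -⟩ | ⟨h, -⟩
    · exact hca (by simpa using congrArg Prod.snd h)
    · exact hcb (by simpa using congrArg Prod.snd h)
  exact ((hadj a c (Ne.symm hca) h1).reachable).trans ((hadj c b hcb h2).reachable)

/-- Path edges are bridges. -/
lemma path_is_bridge (m : ℕ) (hm : m + 1 < k) :
    (HG k t).IsBridge s(((⟨m, by omega⟩ : Fin k), 0), ((⟨m + 1, hm⟩ : Fin k), 0)) := by
  rw [isBridge_iff]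
  · intro hr
    have key := reach_invariant (fun z : Fin k × Fin t => (z.1 : ℕ) ≤ m) ?_ hr
    · simp at key
    · rintro ⟨i, a⟩ ⟨j, b⟩ hadj
      rw [deleteEdges, sdiff_adj, fromEdgeSet_adj] at hadj
      obtain ⟨hadj, hne⟩ := hadj
      rw [hg_adj] at hadj
      obtain ⟨hxy, (h | ⟨ha0, hb0, (h | h)⟩)⟩ := hadj
      · have h' : i = j := h
        show (i : ℕ) ≤ m ↔ (j : ℕ) ≤ m
        rw [h']
      · subst ha0; subst hb0
        have h' : (j : ℕ) = (i : ℕ) + 1 := h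
        show (i : ℕ) ≤ m ↔ (j : ℕ) ≤ m
        by_cases him : (i : ℕ) = m
        · exfalso
          apply hne
          refine ⟨?_, hxy⟩
          rw [Set.mem_singleton_iff]
          exact Sym2.eq_iff.mpr (Or.inl
            ⟨Prod.ext_iff.mpr ⟨Fin.ext (show (i : ℕ) = m by omega), rfl⟩,
             Prod.ext_iff.mpr ⟨Fin.ext (show (j : ℕ) = m + 1 by omega), rfl⟩⟩)
        · omega
      · subst ha0; subst hb0
        have h' : (i : ℕ) = (j : ℕ) + 1 := h
        show (i : ℕ) ≤ m ↔ (j : ℕ) ≤ m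
        by_cases hjm : (j : ℕ) = m
        · exfalso
          apply hne
          refine ⟨?_, hxy⟩
          rw [Set.mem_singleton_iff]
          exact Sym2.eq_iff.mpr (Or.inr
            ⟨Prod.ext_iff.mpr ⟨Fin.ext (show (i : ℕ) = m + 1 by omega), rfl⟩,
             Prod.ext_iff.mpr ⟨Fin.ext (show (j : ℕ) = m by omega), rfl⟩⟩)
        · omega

/-- The bridges are exactly the path edges. -/
lemma bridge_set_eq (hk : 3 ≤ k) (ht : 3 ≤ t) :
    {e : Sym2 (Fin k × Fin t) | (HG k t).IsBridge e} =
      Set.range (fun m : Fin (k - 1) =>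
        s(((⟨m.1, by omega⟩ : Fin k), (0 : Fin t)), ((⟨m.1 + 1, by omega⟩ : Fin k), 0))) := by
  ext e
  simp only [Set.mem_setOf_eq, Set.mem_range]
  constructor
  · intro hb
    revert hb
    induction e with
    | _ x y =>
      intro hb
      have he : s(x, y) ∈ (HG k t).edgeSet :=
        (IsBridge.reachable_iff_adj hb).mp ((hg_connected k t (by omega)).preconnected x y)
      rw [mem_edgeSet, hg_adj] at he
      obtain ⟨i, a⟩ := x
      obtain ⟨j, b⟩ := y
      obtain ⟨hxy, (h | ⟨ha0, hb0, (h | h)⟩)⟩ := he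
      · exfalso
        have h' : i = j := h
        subst h'
        have hab : a ≠ b := fun hab => hxy (by rw [hab])
        exact clique_not_bridge k t ht hab hb
      · subst ha0; subst hb0
        have h' : (j : ℕ) = (i : ℕ) + 1 := h
        have hjk := j.isLt
        refine ⟨⟨i.1, by omega⟩, ?_⟩
        exact Sym2.eq_iff.mpr (Or.inl
          ⟨rfl, Prod.ext_iff.mpr ⟨Fin.ext (show (i : ℕ) + 1 = (j : ℕ) by omega), rfl⟩⟩)
      · subst ha0; subst hb0
        have h' : (i : ℕ) = (j : ℕ) + 1 := h
        have hik := i.isLt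
        refine ⟨⟨j.1, by omega⟩, ?_⟩
        exact Sym2.eq_iff.mpr (Or.inr
          ⟨rfl, Prod.ext_iff.mpr ⟨Fin.ext (show (j : ℕ) + 1 = (i : ℕ) by omega), rfl⟩⟩)
  · rintro ⟨m, rfl⟩
    exact path_is_bridge k t m.1 (by omega)

end Construction

theorem stmt_1 (k t : ℕ) (hk : 3 ≤ k) (ht : 3 ≤ t) :
    ∃ (V : Type) (_ : Fintype V) (H : SimpleGraph V),
      Fintype.card V = k * t ∧ H.Connected ∧
      (∀ v, t - 1 ≤ vdeg H v) ∧ (∃ v, vdeg H v = t - 1) ∧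
      {e : Sym2 V | H.IsBridge e}.ncard = k - 1 := by
  haveI : NeZero t := ⟨by omega⟩
  refine ⟨Fin k × Fin t, inferInstance, HG k t, by simp, hg_connected k t (by omega),
    deg_lower k t, ⟨((⟨0, by omega⟩ : Fin k), (⟨1, by omega⟩ : Fin t)),
      deg_exact k t (by simp [Fin.ext_iff])⟩, ?_⟩
  rw [bridge_set_eq k t hk ht, ← Set.image_univ,
    Set.ncard_image_of_injective _ ?_, Set.ncard_univ, Nat.card_eq_fintype_card, Fintype.card_fin]
  intro m m' h
  rw [Sym2.eq_iff] at h
  rcases h with ⟨h1, -⟩ | ⟨h1, h2⟩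
  · have e1 := congrArg (fun p => ((p.1 : Fin k) : ℕ)) h1
    simp at e1
    exact Fin.ext e1
  · have e1 := congrArg (fun p => ((p.1 : Fin k) : ℕ)) h1
    have e2 := congrArg (fun p => ((p.1 : Fin k) : ℕ)) h2
    simp at e1 e2
    omega
end

section
/- Let G be a connected graph of order n ≥ max{k²+k, (⌊k/2⌋·k(k−2)+k²−5k+3)/(k−4)}, where k ≥ 5. If deg(x)+deg(y) ≥ (2n−2k+1)/k for every pair of non-adjacent vertices x, y of G, then G has at most k−2 cut edges. -/
open SimpleGraph

section Stmt3Aux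
variable {V : Type*}

lemma bridge_mem_edgeSet' {G : SimpleGraph V} (hG : G.Connected) {e : Sym2 V}
    (he : G.IsBridge e) : e ∈ G.edgeSet := by
  induction e using Sym2.ind with
  | _ u v => exact (he.reachable_iff_adj).mp (hG.preconnected u v)

lemma walk_reach_or_endpoint {G : SimpleGraph V} {u v a c : V}
    (p : G.Walk a c) :
    (G.deleteEdges {s(u,v)}).Reachable a c ∨ (G.deleteEdges {s(u,v)}).Reachable a u ∨
      (G.deleteEdges {s(u,v)}).Reachable a v := by
  induction p with
  | nil => exact Or.inl (Reachable.refl _)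
  | @cons a b c h q ih =>
    by_cases he : s(a,b) = s(u,v)
    · rw [Sym2.eq_iff] at he
      rcases he with ⟨rfl, rfl⟩ | ⟨rfl, rfl⟩
      · exact Or.inr (Or.inl (Reachable.refl _))
      · exact Or.inr (Or.inr (Reachable.refl _))
    · have hadj : (G.deleteEdges {s(u,v)}).Adj a b := by
        simp only [deleteEdges_adj, Set.mem_singleton_iff]
        exact ⟨h, he⟩
      rcases ih with h1 | h1 | h1
      · exact Or.inl (hadj.reachable.trans h1)
      · exact Or.inr (Or.inl (hadj.reachable.trans h1))
      · exact Or.inr (Or.inr (hadj.reachable.trans h1))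

lemma reach_avoid_aux {G : SimpleGraph V} {uf vf r : V}
    (hu : ¬ G.Reachable r uf) (hv : ¬ G.Reachable r vf) :
    ∀ {y x : V} (_ : G.Walk y x),
      (G.deleteEdges {s(uf,vf)}).Reachable r y → (G.deleteEdges {s(uf,vf)}).Reachable r x := by
  intro y x p
  induction p with
  | nil => exact id
  | @cons a b c h q ih =>
    intro hra
    have hne : s(a,b) ≠ s(uf,vf) := by
      intro he
      rw [Sym2.eq_iff] at he
      have hGa : G.Reachable r a := hra.mono (deleteEdges_le _)
      rcases he with ⟨rfl, rfl⟩ | ⟨rfl, rfl⟩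
      · exact hu hGa
      · exact hv hGa
    have hadj : (G.deleteEdges {s(uf,vf)}).Adj a b := by
      simp only [deleteEdges_adj, Set.mem_singleton_iff]
      exact ⟨h, hne⟩
    exact ih (hra.trans hadj.reachable)


lemma bridge_endpoints {G : SimpleGraph V} (hG : G.Connected) {e : Sym2 V}
    (he : G.IsBridge e) (r : V) :
    ∃ u v : V, e = s(u,v) ∧ ¬ (G.deleteEdges {e}).Reachable r u ∧
      (G.deleteEdges {e}).Reachable r v := by
  induction e using Sym2.ind with
  | _ u v =>
    rw [isBridge_iff] at he
    have hnr := he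
    have hnr' : ¬ (G.deleteEdges {s(u,v)}).Reachable u v := hnr
    have h1 : (G.deleteEdges {s(u,v)}).Reachable r u ∨
        (G.deleteEdges {s(u,v)}).Reachable r v := by
      obtain ⟨p⟩ := hG.preconnected r u
      rcases walk_reach_or_endpoint (u := u) (v := v) p with h | h | h
      · exact Or.inl h
      · exact Or.inl h
      · exact Or.inr h
    by_cases hru : (G.deleteEdges {s(u,v)}).Reachable r u
    · refine ⟨v, u, Sym2.eq_swap.symm, fun hrv => hnr' (hru.symm.trans hrv), hru⟩
    · refine ⟨u, v, rfl, hru, h1.resolve_left hru⟩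
section Inj
variable [Fintype V] {G : SimpleGraph V}

lemma bridges_lt_comps (hG : G.Connected) [Nonempty V] :
    {e : Sym2 V | G.IsBridge e}.ncard + 1 ≤
      Nat.card (G.deleteEdges {e | G.IsBridge e}).ConnectedComponent := by
  classical
  rw [Set.ncard_eq_toFinset_card' {e : Sym2 V | G.IsBridge e}]
  set H := G.deleteEdges {e | G.IsBridge e} with hH
  set cmp : V → H.ConnectedComponent := H.connectedComponentMk with hcmp
  obtain ⟨r⟩ := ‹Nonempty V›
  have key : ∀ e : Sym2 V, ∃ uv : V × V, e ∈ {e : Sym2 V | G.IsBridge e}.toFinset →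
      (e = s(uv.1, uv.2) ∧ ¬ (G.deleteEdges {e}).Reachable r uv.1 ∧
        (G.deleteEdges {e}).Reachable r uv.2) := by
    intro e
    by_cases he : e ∈ {e : Sym2 V | G.IsBridge e}.toFinset
    · have hbr : G.IsBridge e := by simpa using he
      obtain ⟨u, v, h1, h2, h3⟩ := bridge_endpoints hG hbr r
      exact ⟨(u, v), fun _ => ⟨h1, h2, h3⟩⟩
    · exact ⟨(r, r), fun h => absurd h he⟩
  choose F hF using key
  have hHle : ∀ e : Sym2 V, G.IsBridge e → H ≤ G.deleteEdges {e} := by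
    intro e he
    exact deleteEdges_anti (by simpa using he)
  set φ : Sym2 V → H.ConnectedComponent := fun e => cmp (F e).1 with hφ
  have hmaps : ∀ e ∈ {e : Sym2 V | G.IsBridge e}.toFinset,
      φ e ∈ Finset.univ.erase (cmp r) := by
    intro e he
    have hbr : G.IsBridge e := by simpa using he
    obtain ⟨h1, h2, h3⟩ := hF e he
    refine Finset.mem_erase.mpr ⟨?_, Finset.mem_univ _⟩
    intro hEq
    have : H.Reachable r (F e).1 := ConnectedComponent.exact hEq.symm
    exact h2 (this.mono (hHle e hbr))
  have hinj : Set.InjOn φ {e : Sym2 V | G.IsBridge e}.toFinset := by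
    intro e he f hf hEq
    by_contra hne
    have hbe : G.IsBridge e := by simpa using he
    have hbf : G.IsBridge f := by simpa using hf
    obtain ⟨he1, he2, he3⟩ := hF e he
    obtain ⟨hf1, hf2, hf3⟩ := hF f hf
    set ue := (F e).1; set ve := (F e).2; set uf := (F f).1; set vf := (F f).2
    -- cmp ue = cmp uf
    have hcc : cmp ue = cmp uf := hEq
    have hreach_uu : H.Reachable uf ue := ConnectedComponent.exact hcc.symm
    -- (1) uf not reachable from r in G-e
    have h1 : ¬ (G.deleteEdges {e}).Reachable r uf := by
      intro h
      exact he2 (h.trans (hreach_uu.mono (hHle e hbe)))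
    -- (2) vf not reachable from r in G-e
    have hfadj : G.Adj uf vf := by
      have : f ∈ G.edgeSet := bridge_mem_edgeSet' hG hbf
      rw [hf1] at this
      exact this
    have h2 : ¬ (G.deleteEdges {e}).Reachable r vf := by
      intro h
      have hadj : (G.deleteEdges {e}).Adj vf uf := by
        simp only [deleteEdges_adj, Set.mem_singleton_iff]
        refine ⟨hfadj.symm, ?_⟩
        rw [Sym2.eq_swap, ← hf1]
        exact fun h' => hne (h'.symm ▸ rfl)
      exact h1 (h.trans hadj.reachable)
    -- (3) r reaches ve in (G-e)-f
    have h3 : ((G.deleteEdges {e}).deleteEdges {s(uf,vf)}).Reachable r ve := by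
      obtain ⟨p⟩ := he3
      exact reach_avoid_aux h1 h2 p (Reachable.refl r)
    -- (4) transfer to G-f
    have hle4 : (G.deleteEdges {e}).deleteEdges {s(uf,vf)} ≤ G.deleteEdges {f} := by
      intro a b hab
      simp only [deleteEdges_adj, Set.mem_singleton_iff] at hab ⊢
      exact ⟨hab.1.1, by rw [hf1]; exact hab.2⟩
    have h4 : (G.deleteEdges {f}).Reachable r ve := h3.mono hle4
    -- (5) edge e gives r reaches ue in G-f, then reaches uf: contradiction
    have headj : G.Adj ue ve := by
      have : e ∈ G.edgeSet := bridge_mem_edgeSet' hG hbe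
      rw [he1] at this
      exact this
    have h5 : (G.deleteEdges {f}).Adj ve ue := by
      simp only [deleteEdges_adj, Set.mem_singleton_iff]
      refine ⟨headj.symm, ?_⟩
      rw [Sym2.eq_swap, ← he1]
      exact hne
    have h6 : (G.deleteEdges {f}).Reachable r uf :=
      ((h4.trans h5.reachable).trans (hreach_uu.symm.mono (hHle f hbf)))
    exact hf2 h6
  have hcard := Finset.card_le_card_of_injOn φ hmaps hinj
  have : (Finset.univ.erase (cmp r)).card = Fintype.card H.ConnectedComponent - 1 := by
    rw [Finset.card_erase_of_mem (Finset.mem_univ _), Finset.card_univ]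
  have hpos : 1 ≤ Fintype.card H.ConnectedComponent :=
    Fintype.card_pos_iff.mpr ⟨cmp r⟩
  have hNat : Nat.card H.ConnectedComponent =
      Fintype.card H.ConnectedComponent := Nat.card_eq_fintype_card
  show {e : Sym2 V | G.IsBridge e}.toFinset.card + 1 ≤ Nat.card H.ConnectedComponent
  omega
  
end Inj
set_option maxHeartbeats 4000000 in
theorem stmt_3' {V : Type*} [Fintype V] (G : SimpleGraph V) (k : ℕ) (hk : 5 ≤ k)
    (hn1 : k ^ 2 + k ≤ Fintype.card V)
    (hn2 : (((k / 2 : ℕ) : ℚ) * k * ((k : ℚ) - 2) + (k : ℚ) ^ 2 - 5 * k + 3) / ((k : ℚ) - 4)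
      ≤ (Fintype.card V : ℚ))
    (hG : G.Connected)
    (hdeg : ∀ x y : V, x ≠ y → ¬G.Adj x y →
      (2 * (Fintype.card V : ℚ) - 2 * k + 1) / k ≤
        ((G.neighborSet x).ncard : ℚ) + ((G.neighborSet y).ncard : ℚ)) :
    {e : Sym2 V | G.IsBridge e}.ncard ≤ k - 2 := by
  classical
  by_contra hcon
  push_neg at hcon
  set n := Fintype.card V with hn
  have hnk : k ^ 2 + k ≤ n := hn1
  have hnpos : 0 < n := by nlinarith
  have hnV : Nonempty V := Fintype.card_pos_iff.mp hnpos
  set Bf : Finset (Sym2 V) := {e : Sym2 V | G.IsBridge e}.toFinset with hBf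
  have hBfmem : ∀ e : Sym2 V, e ∈ Bf ↔ G.IsBridge e := by intro e; simp [hBf]
  set b : ℕ := Bf.card with hbdef
  have hncard : {e : Sym2 V | G.IsBridge e}.ncard = b := Set.ncard_eq_toFinset_card' _
  have hb : k - 1 ≤ b := by rw [hncard] at hcon; omega
  set H := G.deleteEdges {e | G.IsBridge e} with hH
  letI : Fintype H.ConnectedComponent :=
    Fintype.ofSurjective H.connectedComponentMk (fun C => C.exists_rep)
  set cmp : V → H.ConnectedComponent := H.connectedComponentMk with hcmp
  set t : ℕ := Fintype.card H.ConnectedComponent with ht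
  -- t ≥ b + 1
  have htb : b + 1 ≤ t := by
    have := bridges_lt_comps (G := G) hG
    rw [hncard, Nat.card_eq_fintype_card] at this
    exact this
  -- supports and sizes
  set supp : H.ConnectedComponent → Finset V :=
    fun C => Finset.univ.filter (fun v => cmp v = C) with hsupp
  set sz : H.ConnectedComponent → ℕ := fun C => (supp C).card with hsz
  have hsupp_mem : ∀ (x : V) (C : H.ConnectedComponent), x ∈ supp C ↔ cmp x = C := by
    intro x C; simp [hsupp]
  have hsz_sum : ∑ C : H.ConnectedComponent, sz C = n := by
    rw [hn, ← Finset.card_univ]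
    exact (Finset.card_eq_sum_card_fiberwise (fun x _ => Finset.mem_univ (cmp x))).symm
  have hsz_pos : ∀ C, 1 ≤ sz C := by
    intro C
    obtain ⟨v, rfl⟩ := C.exists_rep
    have : v ∈ supp (cmp v) := by rw [hsupp_mem]
    exact Finset.card_pos.mpr ⟨v, this⟩
  -- incidence counts
  set d : V → ℕ := fun x => (Bf.filter (fun e => x ∈ e)).card with hd
  set touch : Sym2 V → H.ConnectedComponent → Prop :=
    fun e C => ∃ x ∈ e, cmp x = C with htouch
  set w : H.ConnectedComponent → ℕ :=
    fun C => (Bf.filter (fun e => touch e C)).card with hw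
  -- bridges connect distinct components
  have hHle : ∀ e ∈ Bf, H ≤ G.deleteEdges {e} := by
    intro e he
    exact deleteEdges_anti (by simpa using (hBfmem e).mp he)
  have hcross : ∀ u v : V, s(u,v) ∈ Bf → cmp u ≠ cmp v := by
    intro u v he hEq
    have hbr : G.IsBridge s(u,v) := (hBfmem _).mp he
    have hreach : H.Reachable u v := ConnectedComponent.exact hEq
    exact (isBridge_iff.mp hbr) (hreach.mono (hHle _ he))
  -- adjacency across components is a bridge
  have hadj_bridge : ∀ x y : V, G.Adj x y → cmp x ≠ cmp y → s(x,y) ∈ Bf := by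
    intro x y hxy hne
    rw [hBfmem]
    by_contra hnb
    have : H.Adj x y := by
      rw [hH]
      simp only [deleteEdges_adj, Set.mem_singleton_iff]
      exact ⟨hxy, by simpa using hnb⟩
    exact hne (ConnectedComponent.sound this.reachable)
  -- each vertex's neighbors: degree bound
  have hdeg_le : ∀ (C : H.ConnectedComponent) (x : V), x ∈ supp C →
      G.degree x + 1 ≤ sz C + d x := by
    intro C x hx
    have hcx : cmp x = C := (hsupp_mem x C).mp hx
    have hsplit : ((G.neighborFinset x).filter (fun y => cmp y = C)).card +
        ((G.neighborFinset x).filter (fun y => ¬ cmp y = C)).card = G.degree x :=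
      Finset.card_filter_add_card_filter_not _
    have h1 : ((G.neighborFinset x).filter (fun y => cmp y = C)).card ≤ sz C - 1 := by
      have hsubA : (G.neighborFinset x).filter (fun y => cmp y = C) ⊆ (supp C).erase x := by
        intro y hy
        rw [Finset.mem_filter, SimpleGraph.mem_neighborFinset] at hy
        rw [Finset.mem_erase, hsupp_mem]
        exact ⟨fun h => G.irrefl (h ▸ hy.1), hy.2⟩
      have := Finset.card_le_card hsubA
      rwa [Finset.card_erase_of_mem hx] at this
    have h2 : ((G.neighborFinset x).filter (fun y => ¬ cmp y = C)).card ≤ d x := by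
      rw [hd]
      apply Finset.card_le_card_of_injOn (fun y => s(x,y))
      · intro y hy
        rw [Finset.mem_coe, Finset.mem_filter, SimpleGraph.mem_neighborFinset] at hy
        rw [Finset.mem_coe, Finset.mem_filter]
        refine ⟨hadj_bridge x y hy.1 (fun h => hy.2 (h ▸ hcx)), Sym2.mem_mk_left x y⟩
      · intro y1 hy1 y2 hy2 he
        simp only [Finset.coe_filter, Set.mem_setOf_eq, SimpleGraph.mem_neighborFinset] at hy1 hy2
        rw [Sym2.eq_iff] at he
        rcases he with ⟨-, h⟩ | ⟨h1', h2'⟩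
        · exact h
        · exact absurd (h2' ▸ hy1.1) G.irrefl
    have := hsz_pos C
    omega
  -- good vertex: all neighbors in own component
  have hgoodv : ∀ x : V, d x = 0 → (∀ y : V, G.Adj x y → cmp y = cmp x) := by
    intro x hx y hxy
    by_contra hne
    have : s(x,y) ∈ Bf := hadj_bridge x y hxy (fun h => hne h.symm)
    have : x ∈ s(x,y) := Sym2.mem_mk_left x y
    have hmem : s(x,y) ∈ Bf.filter (fun e => x ∈ e) := by
      rw [Finset.mem_filter]; exact ⟨‹s(x,y) ∈ Bf›, this⟩
    have : 0 < d x := Finset.card_pos.mpr ⟨_, hmem⟩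
    omega
  have hgood_deg : ∀ x : V, d x = 0 → G.degree x + 1 ≤ sz (cmp x) := by
    intro x hx
    have hsub : G.neighborFinset x ⊆ (supp (cmp x)).erase x := by
      intro y hy
      rw [SimpleGraph.mem_neighborFinset] at hy
      rw [Finset.mem_erase, hsupp_mem]
      exact ⟨fun h => G.irrefl (h ▸ hy), hgoodv x hx y hy⟩
    have h1 := Finset.card_le_card hsub
    have h2 : ((supp (cmp x)).erase x).card = sz (cmp x) - 1 := by
      rw [Finset.card_erase_of_mem]
      rw [hsupp_mem]
    have hdeg_eq : G.degree x = (G.neighborFinset x).card := rfl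
    have := hsz_pos (cmp x)
    omega
  -- nonadjacency of chosen vertices in distinct comps with d = 0
  have hnonadj : ∀ x y : V, d x = 0 → cmp x ≠ cmp y → ¬ G.Adj x y := by
    intro x y hx hne hadj
    exact hne ((hgoodv x hx y hadj).symm)
  -- sum of w over comps = 2b
  have hper : ∀ e ∈ Bf, (Finset.univ.filter (fun C => touch e C)).card = 2 := by
    intro e
    induction e using Sym2.ind with
    | _ u v =>
      intro he
      have hne := hcross u v he
      have hset : Finset.univ.filter (fun C => touch s(u,v) C) = {cmp u, cmp v} := by
        ext C
        simp only [Finset.mem_filter, Finset.mem_univ, true_and, Finset.mem_insert,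
          Finset.mem_singleton, htouch]
        constructor
        · rintro ⟨x, hx, rfl⟩
          rw [Sym2.mem_iff] at hx
          rcases hx with rfl | rfl
          · exact Or.inl rfl
          · exact Or.inr rfl
        · rintro (rfl | rfl)
          · exact ⟨u, Sym2.mem_mk_left u v, rfl⟩
          · exact ⟨v, Sym2.mem_mk_right u v, rfl⟩
      rw [hset, Finset.card_insert_of_notMem (by simpa using hne), Finset.card_singleton]
  have hw_sum : ∑ C : H.ConnectedComponent, w C = 2 * b := by
    have h1 : ∀ C, w C = ∑ e ∈ Bf, if touch e C then 1 else 0 := by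
      intro C; rw [hw]; exact Finset.card_filter _ _
    calc ∑ C : H.ConnectedComponent, w C
        = ∑ C : H.ConnectedComponent, ∑ e ∈ Bf, if touch e C then 1 else 0 := by
          exact Finset.sum_congr rfl (fun C _ => h1 C)
      _ = ∑ e ∈ Bf, ∑ C : H.ConnectedComponent, if touch e C then 1 else 0 :=
          Finset.sum_comm
      _ = ∑ e ∈ Bf, 2 := by
          refine Finset.sum_congr rfl (fun e he => ?_)
          rw [← Finset.card_filter]
          exact hper e he
      _ = 2 * b := by rw [Finset.sum_const, smul_eq_mul, hbdef, Nat.mul_comm]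
  -- sum of d over a component's support = w C
  have hdw : ∀ C, ∑ x ∈ supp C, d x = w C := by
    intro C
    have hper2 : ∀ e ∈ Bf, ((supp C).filter (fun x => x ∈ e)).card
        = if touch e C then 1 else 0 := by
      intro e
      induction e using Sym2.ind with
      | _ u v =>
        intro he
        have hne := hcross u v he
        have hmemuv : ∀ x : V, x ∈ s(u,v) ↔ x = u ∨ x = v := fun x => Sym2.mem_iff
        by_cases hu : cmp u = C
        · have hset : (supp C).filter (fun x => x ∈ s(u,v)) = {u} := by
            ext x
            simp only [Finset.mem_filter, hsupp_mem, Finset.mem_singleton, hmemuv]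
            constructor
            · rintro ⟨hxC, rfl | rfl⟩
              · rfl
              · exact absurd (hu.trans hxC.symm) hne
            · rintro rfl
              exact ⟨hu, Or.inl rfl⟩
          rw [hset, Finset.card_singleton, if_pos ⟨u, Sym2.mem_mk_left u v, hu⟩]
        · by_cases hv : cmp v = C
          · have hset : (supp C).filter (fun x => x ∈ s(u,v)) = {v} := by
              ext x
              simp only [Finset.mem_filter, hsupp_mem, Finset.mem_singleton, hmemuv]
              constructor
              · rintro ⟨hxC, rfl | rfl⟩
                · exact absurd hxC hu
                · rfl
              · rintro rfl
                exact ⟨hv, Or.inr rfl⟩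
            rw [hset, Finset.card_singleton, if_pos ⟨v, Sym2.mem_mk_right u v, hv⟩]
          · have hset : (supp C).filter (fun x => x ∈ s(u,v)) = ∅ := by
              ext x
              simp only [Finset.mem_filter, hsupp_mem, Finset.notMem_empty, iff_false,
                not_and, hmemuv]
              rintro hxC (rfl | rfl)
              · exact hu hxC
              · exact hv hxC
            rw [hset, Finset.card_empty, if_neg]
            rintro ⟨x, hx, hxC⟩
            rw [hmemuv] at hx
            rcases hx with rfl | rfl
            · exact hu hxC
            · exact hv hxC
    have h1 : ∀ x, d x = ∑ e ∈ Bf, if x ∈ e then 1 else 0 := by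
      intro x; rw [hd]; exact Finset.card_filter _ _
    calc ∑ x ∈ supp C, d x
        = ∑ x ∈ supp C, ∑ e ∈ Bf, if x ∈ e then 1 else 0 :=
          Finset.sum_congr rfl (fun x _ => h1 x)
      _ = ∑ e ∈ Bf, ∑ x ∈ supp C, if x ∈ e then 1 else 0 := Finset.sum_comm
      _ = ∑ e ∈ Bf, if touch e C then 1 else 0 := by
          refine Finset.sum_congr rfl (fun e he => ?_)
          rw [← Finset.card_filter]
          exact hper2 e he
      _ = w C := by rw [hw]; exact (Finset.card_filter _ _).symm
  -- every component has w ≥ 1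
  have hw_pos : ∀ C, 1 ≤ w C := by
    intro C
    have ht2 : 1 < t := by omega
    obtain ⟨C', hC'⟩ := Fintype.exists_ne_of_one_lt_card (by omega) C
    obtain ⟨v, rfl⟩ := C.exists_rep
    obtain ⟨u, rfl⟩ := C'.exists_rep
    have hvu : cmp v ≠ cmp u := fun h => hC' h.symm
    obtain ⟨p⟩ := hG.preconnected v u
    have hstep : ∀ (a c : V) (_ : G.Walk a c), cmp a = cmp v → cmp c ≠ cmp v →
        ∃ x y, G.Adj x y ∧ cmp x = cmp v ∧ cmp y ≠ cmp v := by
      intro a c p'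
      induction p' with
      | nil => intro h1 h2; exact absurd h1 h2
      | @cons a' b' c' hadj q ih =>
        intro h1 h2
        by_cases hb2 : cmp b' = cmp v
        · exact ih hb2 h2
        · exact ⟨a', b', hadj, h1, hb2⟩
    obtain ⟨x, y, hxy, hxC, hyC⟩ := hstep v u p rfl hC'
    have hmem : s(x,y) ∈ Bf.filter (fun e => touch e (cmp v)) := by
      rw [Finset.mem_filter]
      exact ⟨hadj_bridge x y hxy (fun h => hyC (h ▸ hxC)), ⟨x, Sym2.mem_mk_left x y, hxC⟩⟩
    exact Finset.card_pos.mpr ⟨_, hmem⟩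
  -- triangle-freeness
  have hextract : ∀ e ∈ Bf, ∀ C C' : H.ConnectedComponent, C ≠ C' → touch e C → touch e C' →
      ∃ a b' : V, e = s(a,b') ∧ cmp a = C ∧ cmp b' = C' := by
    intro e
    induction e using Sym2.ind with
    | _ u v =>
      intro _ C C' hne h1 h2
      simp only [htouch] at h1 h2
      obtain ⟨x, hx, hxC⟩ := h1
      obtain ⟨y, hy, hyC⟩ := h2
      rw [Sym2.mem_iff] at hx hy
      rcases hx with rfl | rfl <;> rcases hy with rfl | rfl
      · exact absurd (hxC.symm.trans hyC) hne
      · exact ⟨x, y, rfl, hxC, hyC⟩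
      · exact ⟨x, y, Sym2.eq_swap, hxC, hyC⟩
      · exact absurd (hxC.symm.trans hyC) hne
  have htri : ∀ C1 C2 C3 : H.ConnectedComponent, C1 ≠ C2 → C1 ≠ C3 → C2 ≠ C3 →
      (∃ e ∈ Bf, touch e C1 ∧ touch e C2) → (∃ e ∈ Bf, touch e C2 ∧ touch e C3) →
      (∃ e ∈ Bf, touch e C1 ∧ touch e C3) → False := by
    rintro C1 C2 C3 h12 h13 h23 ⟨e12, he12, ht121, ht122⟩ ⟨e23, he23, ht232, ht233⟩
      ⟨e13, he13, ht131, ht133⟩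
    obtain ⟨x1, x2, he12eq, hx1, hx2⟩ := hextract e12 he12 C1 C2 h12 ht121 ht122
    obtain ⟨y2, y3, he23eq, hy2, hy3⟩ := hextract e23 he23 C2 C3 h23 ht232 ht233
    obtain ⟨z1, z3, he13eq, hz1, hz3⟩ := hextract e13 he13 C1 C3 h13 ht131 ht133
    have hne13 : e13 ≠ e12 := by
      intro h
      rw [he13eq, he12eq, Sym2.eq_iff] at h
      rcases h with ⟨-, h2'⟩ | ⟨-, h2'⟩
      · exact h23 ((h2' ▸ hx2 : cmp z3 = C2).symm.trans hz3)
      · exact h13 ((h2' ▸ hx1 : cmp z3 = C1).symm.trans hz3)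
    have hne23 : e23 ≠ e12 := by
      intro h
      rw [he23eq, he12eq, Sym2.eq_iff] at h
      rcases h with ⟨h1', -⟩ | ⟨-, h2'⟩
      · exact h12 ((h1' ▸ hx1 : cmp y2 = C1).symm.trans hy2)
      · exact h13 ((h2' ▸ hx1 : cmp y3 = C1).symm.trans hy3)
    have hGe := hHle e12 he12
    have r1 : (G.deleteEdges {e12}).Reachable x1 z1 :=
      (ConnectedComponent.exact (hx1.trans hz1.symm)).mono hGe
    have hbr13 : G.Adj z1 z3 := by
      have h := bridge_mem_edgeSet' hG ((hBfmem e13).mp he13)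
      rw [he13eq] at h
      exact h
    have a1 : (G.deleteEdges {e12}).Adj z1 z3 := by
      simp only [deleteEdges_adj, Set.mem_singleton_iff]
      exact ⟨hbr13, by rw [← he13eq]; exact hne13⟩
    have r2 : (G.deleteEdges {e12}).Reachable z3 y3 :=
      (ConnectedComponent.exact (hz3.trans hy3.symm)).mono hGe
    have hbr23 : G.Adj y2 y3 := by
      have h := bridge_mem_edgeSet' hG ((hBfmem e23).mp he23)
      rw [he23eq] at h
      exact h
    have a2 : (G.deleteEdges {e12}).Adj y3 y2 := by
      simp only [deleteEdges_adj, Set.mem_singleton_iff]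
      refine ⟨hbr23.symm, ?_⟩
      rw [Sym2.eq_swap, ← he23eq]
      exact hne23
    have r3 : (G.deleteEdges {e12}).Reachable y2 x2 :=
      (ConnectedComponent.exact (hy2.trans hx2.symm)).mono hGe
    have rt : (G.deleteEdges {e12}).Reachable x1 x2 :=
      (((r1.trans a1.reachable).trans r2).trans a2.reachable).trans r3
    have hbr12 : G.IsBridge s(x1,x2) := by
      rw [← he12eq]; exact (hBfmem e12).mp he12
    rw [he12eq] at rt
    exact (isBridge_iff.mp hbr12) rt
  -- degree pair bound, in ℚ
  set q : ℚ := (2 * (n : ℚ) + 1) / k with hq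
  have hk0 : (0:ℚ) < (k:ℚ) := by positivity
  have hkq : (k:ℚ) * q = 2 * n + 1 := by
    rw [hq]; field_simp
  have hq_lb : 2 * (k:ℚ) + 2 + 1/k ≤ q := by
    have hcast : (k:ℚ)^2 + (k:ℚ) ≤ (n:ℚ) := by exact_mod_cast hnk
    rw [hq, le_div_iff₀ hk0]
    have h1k : (1/(k:ℚ))*(k:ℚ) = 1 := by field_simp
    nlinarith [hcast, hk0]
  have hpair : ∀ x y : V, x ≠ y → ¬ G.Adj x y →
      q - 2 ≤ (G.degree x : ℚ) + (G.degree y : ℚ) := by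
    intro x y hne hnadj
    have := hdeg x y hne hnadj
    have hvd : ∀ z : V, ((G.neighborSet z).ncard : ℚ) = (G.degree z : ℚ) := by
      intro z
      rw [Set.ncard_eq_toFinset_card', SimpleGraph.degree, SimpleGraph.neighborFinset_def]
    rw [hvd, hvd] at this
    have heq : (2 * (n : ℚ) - 2 * k + 1) / k = q - 2 := by
      rw [hq]; field_simp; ring
    rw [heq] at this
    exact this
  -- good/bad components
  set goodC : H.ConnectedComponent → Prop := fun C => ∃ x ∈ supp C, d x = 0 with hgoodC
  set Gd : Finset H.ConnectedComponent := Finset.univ.filter goodC with hGd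
  set Bd : Finset H.ConnectedComponent := Gdᶜ with hBd
  have hGdmem : ∀ C, C ∈ Gd ↔ goodC C := by intro C; simp [hGd]
  have hBdmem : ∀ C, C ∈ Bd ↔ ¬ goodC C := by intro C; simp [hBd, hGd]
  set g : ℕ := Gd.card with hg
  set s : ℕ := Bd.card with hs
  have hgs : g + s = t := by
    rw [hg, hs, hBd, Finset.card_add_card_compl, ← Finset.card_univ, ht]
    rfl
  -- bad facts
  have hbad_d1 : ∀ C ∈ Bd, ∀ x ∈ supp C, 1 ≤ d x := by
    intro C hC x hx
    by_contra h
    exact ((hBdmem C).mp hC) ⟨x, hx, by omega⟩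
  have hbad_size : ∀ C ∈ Bd, sz C ≤ w C := by
    intro C hC
    calc sz C = ∑ _x ∈ supp C, 1 := by rw [hsz]; exact Finset.card_eq_sum_ones _
      _ ≤ ∑ x ∈ supp C, d x := Finset.sum_le_sum (fun x hx => hbad_d1 C hC x hx)
      _ = w C := hdw C
  have hbad_y : ∀ C ∈ Bd, ∃ y ∈ supp C, G.degree y ≤ w C := by
    intro C hC
    obtain ⟨y, hy, hmin⟩ := Finset.exists_min_image (supp C) d (by
      rw [← Finset.card_pos]
      exact hsz_pos C)
    refine ⟨y, hy, ?_⟩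
    have hsum : sz C * d y ≤ w C := by
      rw [← hdw C]
      calc sz C * d y = ∑ _x ∈ supp C, d y := by
            rw [Finset.sum_const, smul_eq_mul, hsz]
        _ ≤ ∑ x ∈ supp C, d x := Finset.sum_le_sum (fun x hx => hmin x hx)
    have hdy1 : 1 ≤ d y := hbad_d1 C hC y hy
    have hsz1 : 1 ≤ sz C := hsz_pos C
    have hdl := hdeg_le C y hy
    have hkey : sz C + d y ≤ sz C * d y + 1 := by nlinarith
    omega
  -- good pair bound
  have hgood_x : ∀ C ∈ Gd, ∃ x ∈ supp C, d x = 0 := by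
    intro C hC
    exact (hGdmem C).mp hC
  have hgood_pair : ∀ C ∈ Gd, ∀ C' ∈ Gd, C ≠ C' →
      q ≤ (sz C : ℚ) + (sz C' : ℚ) := by
    intro C hC C' hC' hne
    obtain ⟨x, hx, hdx⟩ := hgood_x C hC
    obtain ⟨x', hx', hdx'⟩ := hgood_x C' hC'
    have hcx : cmp x = C := (hsupp_mem _ _).mp hx
    have hcx' : cmp x' = C' := (hsupp_mem _ _).mp hx'
    have hxx' : x ≠ x' := fun h => hne (hcx ▸ hcx' ▸ (h ▸ rfl))
    have hnadj : ¬ G.Adj x x' := hnonadj x x' hdx (by rw [hcx, hcx']; exact hne)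
    have hp := hpair x x' hxx' hnadj
    have hd1 : G.degree x + 1 ≤ sz C := hcx ▸ hgood_deg x hdx
    have hd2 : G.degree x' + 1 ≤ sz C' := hcx' ▸ hgood_deg x' hdx'
    have hd1' : (G.degree x : ℚ) + 1 ≤ (sz C : ℚ) := by exact_mod_cast hd1
    have hd2' : (G.degree x' : ℚ) + 1 ≤ (sz C' : ℚ) := by exact_mod_cast hd2
    linarith
  -- good-bad bound
  have hgoodbad : ∀ C ∈ Gd, ∀ C' ∈ Bd, q - 1 - (sz C : ℚ) ≤ (w C' : ℚ) := by
    intro C hC C' hC'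
    have hne : C ≠ C' := fun h => ((hBdmem C').mp hC') (h ▸ (hGdmem C).mp hC)
    obtain ⟨x, hx, hdx⟩ := hgood_x C hC
    obtain ⟨y, hy, hdy⟩ := hbad_y C' hC'
    have hcx : cmp x = C := (hsupp_mem _ _).mp hx
    have hcy : cmp y = C' := (hsupp_mem _ _).mp hy
    have hxy : x ≠ y := fun h => hne (hcx ▸ hcy ▸ (h ▸ rfl))
    have hnadj : ¬ G.Adj x y := hnonadj x y hdx (by rw [hcx, hcy]; exact hne)
    have hp := hpair x y hxy hnadj
    have hd1 : G.degree x + 1 ≤ sz C := hcx ▸ hgood_deg x hdx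
    have hd1' : (G.degree x : ℚ) + 1 ≤ (sz C : ℚ) := by exact_mod_cast hd1
    have hd2' : (G.degree y : ℚ) ≤ (w C' : ℚ) := by exact_mod_cast hdy
    linarith
  -- bad-bad: at most 2 bads with small w
  set Sf : Finset H.ConnectedComponent :=
    Bd.filter (fun C => (w C : ℚ) < q/2 - 1) with hSf
  have hbadbad : ∀ C ∈ Bd, ∀ C' ∈ Bd, C ≠ C' → (¬ ∃ e ∈ Bf, touch e C ∧ touch e C') →
      q - 2 ≤ (w C : ℚ) + (w C' : ℚ) := by
    intro C hC C' hC' hne hnb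
    obtain ⟨y, hy, hdy⟩ := hbad_y C hC
    obtain ⟨y', hy', hdy'⟩ := hbad_y C' hC'
    have hcy : cmp y = C := (hsupp_mem _ _).mp hy
    have hcy' : cmp y' = C' := (hsupp_mem _ _).mp hy'
    have hyy' : y ≠ y' := fun h => hne (hcy ▸ hcy' ▸ (h ▸ rfl))
    have hnadj : ¬ G.Adj y y' := by
      intro hadj
      refine hnb ⟨s(y,y'), hadj_bridge y y' hadj (by rw [hcy, hcy']; exact hne), ?_, ?_⟩
      · exact ⟨y, Sym2.mem_mk_left _ _, hcy⟩
      · exact ⟨y', Sym2.mem_mk_right _ _, hcy'⟩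
    have hp := hpair y y' hyy' hnadj
    have hd1' : (G.degree y : ℚ) ≤ (w C : ℚ) := by exact_mod_cast hdy
    have hd2' : (G.degree y' : ℚ) ≤ (w C' : ℚ) := by exact_mod_cast hdy'
    linarith
  have hSf2 : Sf.card ≤ 2 := by
    by_contra h
    rw [not_le] at h
    obtain ⟨Ca, Cb, Cc, hCa, hCb, hCc, hab, hac, hbc⟩ := Finset.two_lt_card_iff.mp h
    have hmemB : ∀ C ∈ Sf, C ∈ Bd ∧ (w C : ℚ) < q/2 - 1 := by
      intro C hC
      rw [hSf, Finset.mem_filter] at hC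
      exact hC
    obtain ⟨hCaB, hCaw⟩ := hmemB _ hCa
    obtain ⟨hCbB, hCbw⟩ := hmemB _ hCb
    obtain ⟨hCcB, hCcw⟩ := hmemB _ hCc
    have hcommon : ∀ C ∈ Bd, ∀ C' ∈ Bd, C ≠ C' → (w C : ℚ) < q/2 - 1 →
        (w C' : ℚ) < q/2 - 1 → ∃ e ∈ Bf, touch e C ∧ touch e C' := by
      intro C hC C' hC' hne hw1 hw2
      by_contra hnb
      have := hbadbad C hC C' hC' hne hnb
      linarith
    exact htri Ca Cb Cc hab hac hbc
      (hcommon _ hCaB _ hCbB hab hCaw hCbw)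
      (hcommon _ hCbB _ hCcB hbc hCbw hCcw)
      (hcommon _ hCaB _ hCcB hac hCaw hCcw)
  -- ARITHMETIC ENDGAME
  have hkQ : (5:ℚ) ≤ (k:ℚ) := by exact_mod_cast hk
  have hnQ : (k:ℚ)^2 + (k:ℚ) ≤ (n:ℚ) := by exact_mod_cast hnk
  have h1kpos : (0:ℚ) ≤ 1/(k:ℚ) := by positivity
  have hqpos : 0 < q := by linarith
  have htk : k ≤ t := by omega
  have hsplitQ : (∑ C ∈ Gd, (sz C:ℚ)) + (∑ C ∈ Bd, (sz C:ℚ)) = (n:ℚ) := by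
    rw [hBd, Finset.sum_add_sum_compl]
    rw [← hsz_sum]
    push_cast
    rfl
  have hwsplitQ : (∑ C ∈ Gd, (w C:ℚ)) + (∑ C ∈ Bd, (w C:ℚ)) = 2*(b:ℚ) := by
    rw [hBd, Finset.sum_add_sum_compl]
    rw [show ((2:ℚ)*(b:ℚ)) = ((2*b : ℕ):ℚ) by push_cast; ring, ← hw_sum]
    push_cast
    rfl
  have hSB_ge : (s:ℚ) ≤ ∑ C ∈ Bd, (sz C:ℚ) := by
    rw [hs]
    calc ((Bd.card : ℕ):ℚ) = ∑ _C ∈ Bd, (1:ℚ) := by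
          rw [Finset.sum_const, nsmul_eq_mul, mul_one]
      _ ≤ ∑ C ∈ Bd, (sz C:ℚ) := Finset.sum_le_sum (fun C _ => by
          exact_mod_cast hsz_pos C)
  have hSGw_ge : (g:ℚ) ≤ ∑ C ∈ Gd, (w C:ℚ) := by
    rw [hg]
    calc ((Gd.card : ℕ):ℚ) = ∑ _C ∈ Gd, (1:ℚ) := by
          rw [Finset.sum_const, nsmul_eq_mul, mul_one]
      _ ≤ ∑ C ∈ Gd, (w C:ℚ) := Finset.sum_le_sum (fun C _ => by
          exact_mod_cast hw_pos C)
  have hbQ : (b:ℚ) + 1 ≤ (t:ℚ) := by exact_mod_cast htb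
  have htQ : (t:ℚ) = (g:ℚ) + (s:ℚ) := by exact_mod_cast hgs.symm
  have hwB_le : ∑ C ∈ Bd, (w C:ℚ) ≤ (g:ℚ) + 2*(s:ℚ) - 2 := by
    have : 2*(b:ℚ) ≤ 2*(t:ℚ) - 2 := by linarith
    linarith
  -- CASE A : k ≤ g
  by_cases hgk : k ≤ g
  · have hg2 : 2 ≤ g := by omega
    have hGdne : Gd.Nonempty := Finset.card_pos.mp (by omega)
    obtain ⟨C1, hC1, hC1min⟩ := Finset.exists_min_image Gd sz hGdne
    have hSG_le : ∑ C ∈ Gd, (sz C:ℚ) ≤ (n:ℚ) := by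
      have h0 : (0:ℚ) ≤ ∑ C ∈ Bd, (sz C:ℚ) :=
        Finset.sum_nonneg (fun C _ => by positivity)
      linarith
    have hothers : ∀ C ∈ Gd.erase C1, q - (sz C1:ℚ) ≤ (sz C : ℚ) := by
      intro C hC
      have hCG := Finset.mem_of_mem_erase hC
      have hne := Finset.ne_of_mem_erase hC
      have := hgood_pair C1 hC1 C hCG hne.symm
      linarith
    have hmin_all : ∀ C ∈ Gd, (sz C1:ℚ) ≤ (sz C:ℚ) := by
      intro C hC
      exact_mod_cast hC1min C hC
    have hgQ : (k:ℚ) ≤ (g:ℚ) := by exact_mod_cast hgk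
    have hcard_erase : ((Gd.erase C1).card : ℚ) = (g:ℚ) - 1 := by
      rw [Finset.card_erase_of_mem hC1, hg]
      have : 1 ≤ Gd.card := by rw [← hg]; omega
      push_cast [Nat.cast_sub this]
      ring
    have hkey : (k:ℚ) * q / 2 ≤ ∑ C ∈ Gd, (sz C:ℚ) := by
      by_cases ha : (sz C1:ℚ) ≤ q/2
      · have hsum1 : ((Gd.erase C1).card) • (q - (sz C1:ℚ)) ≤
            ∑ C ∈ Gd.erase C1, (sz C:ℚ) :=
          Finset.card_nsmul_le_sum _ _ _ hothers
        rw [nsmul_eq_mul] at hsum1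
        rw [hcard_erase] at hsum1
        have hsum2 : ∑ C ∈ Gd.erase C1, (sz C:ℚ) + (sz C1:ℚ) = ∑ C ∈ Gd, (sz C:ℚ) :=
          Finset.sum_erase_add _ _ hC1
        linarith [mul_nonneg (by linarith : (0:ℚ) ≤ (g:ℚ) - 2)
            (by linarith : (0:ℚ) ≤ q/2 - (sz C1:ℚ)),
          mul_nonneg (by linarith : (0:ℚ) ≤ (g:ℚ) - (k:ℚ)) (le_of_lt hqpos)]
      · push_neg at ha
        have hsum1 : (Gd.card) • (sz C1:ℚ) ≤ ∑ C ∈ Gd, (sz C:ℚ) :=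
          Finset.card_nsmul_le_sum _ _ _ hmin_all
        rw [nsmul_eq_mul, ← hg] at hsum1
        have hgpos : (0:ℚ) < (g:ℚ) := by
          have : 0 < g := by omega
          exact_mod_cast this
        linarith [mul_nonneg (by linarith : (0:ℚ) ≤ (g:ℚ) - (k:ℚ)) (le_of_lt hqpos),
          mul_pos hgpos (by linarith : (0:ℚ) < (sz C1:ℚ) - q/2)]
    have : (k:ℚ)*q = 2*(n:ℚ)+1 := hkq
    linarith
  -- now g ≤ k - 1
  push_neg at hgk
  have hgk1 : g + 1 ≤ k := hgk
  have hs1 : 1 ≤ s := by omega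
  by_cases hg0 : g = 0
  · -- all components bad
    have hGdcard : Gd.card = 0 := by omega
    have hGdempty : Gd = ∅ := Finset.card_eq_zero.mp hGdcard
    have hSfB : Sf ⊆ Bd := by rw [hSf]; exact Finset.filter_subset _ _
    have hw_not_Sf : ∀ C ∈ Bd \ Sf, q/2 - 1 ≤ (w C:ℚ) := by
      intro C hC
      rw [Finset.mem_sdiff] at hC
      have h2 := hC.2
      rw [hSf, Finset.mem_filter, not_and] at h2
      exact not_lt.mp (h2 hC.1)
    have hsum_sdiff : ∑ C ∈ Bd \ Sf, (w C:ℚ) + ∑ C ∈ Sf, (w C:ℚ) = ∑ C ∈ Bd, (w C:ℚ) :=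
      Finset.sum_sdiff hSfB
    have hcard_sdiff : (Bd \ Sf).card = s - Sf.card := by
      rw [Finset.card_sdiff_of_subset hSfB, hs]
    have hcardSf_le : Sf.card ≤ s := by rw [hs]; exact Finset.card_le_card hSfB
    have hlow1 : ((Bd \ Sf).card) • (q/2 - 1) ≤ ∑ C ∈ Bd \ Sf, (w C:ℚ) :=
      Finset.card_nsmul_le_sum _ _ _ hw_not_Sf
    rw [nsmul_eq_mul] at hlow1
    have hlow2 : (0:ℚ) ≤ ∑ C ∈ Sf, (w C:ℚ) :=
      Finset.sum_nonneg (fun C _ => Nat.cast_nonneg _)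
    have hcast1 : (((Bd \ Sf).card : ℕ):ℚ) = (s:ℚ) - (Sf.card:ℚ) := by
      rw [hcard_sdiff]
      push_cast [Nat.cast_sub hcardSf_le]
      ring
    have hsQ5 : (5:ℚ) ≤ (s:ℚ) := by
      have : k ≤ s := by omega
      have : (k:ℚ) ≤ (s:ℚ) := by exact_mod_cast this
      linarith
    have hcQ : (Sf.card:ℚ) ≤ 2 := by exact_mod_cast hSf2
    have hcQ0 : (0:ℚ) ≤ (Sf.card:ℚ) := Nat.cast_nonneg _
    -- (s - c)(q/2 - 1) ≤ 2s - 2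
    have hA : ((s:ℚ) - (Sf.card:ℚ)) * (q/2 - 1) ≤ 2*(s:ℚ) - 2 := by
      rw [hcast1] at hlow1
      have hgQ0 : (g:ℚ) = 0 := by exact_mod_cast hg0
      linarith
    have hq12 : (12:ℚ) ≤ q := by linarith
    have hB : ((s:ℚ) - 2) * (q/2 - 1) ≤ ((s:ℚ) - (Sf.card:ℚ)) * (q/2 - 1) := by
      apply mul_le_mul_of_nonneg_right _ (by linarith)
      linarith
    have hC' : ((s:ℚ) - 2) * 5 ≤ ((s:ℚ) - 2) * (q/2 - 1) := by
      apply mul_le_mul_of_nonneg_left _ (by linarith)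
      linarith
    linarith
  -- g ≥ 1 region
  have hg1 : 1 ≤ g := by omega
  have hGdne : Gd.Nonempty := Finset.card_pos.mp (by omega)
  obtain ⟨C1, hC1, hC1min⟩ := Finset.exists_min_image Gd sz hGdne
  have ha1_1 : (1:ℚ) ≤ (sz C1:ℚ) := by exact_mod_cast hsz_pos C1
  have hbadw : ∀ C ∈ Bd, q - 1 - (sz C1:ℚ) ≤ (w C:ℚ) := fun C hC => hgoodbad C1 hC1 C hC
  have hSG_ge : (g:ℚ) * (sz C1:ℚ) ≤ ∑ C ∈ Gd, (sz C:ℚ) := by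
    have h := Finset.card_nsmul_le_sum Gd (fun C => (sz C:ℚ)) (sz C1:ℚ)
      (fun C hC => by
        show (sz C1:ℚ) ≤ (sz C:ℚ)
        exact_mod_cast hC1min C hC)
    rw [nsmul_eq_mul] at h
    rw [hg]
    exact h
  have hnge : (g:ℚ) * (sz C1:ℚ) + (s:ℚ) ≤ (n:ℚ) := by linarith
  have hsqk : (0:ℚ) ≤ (k:ℚ)*((k:ℚ)-5) := mul_nonneg (by linarith) (by linarith)
  have hcubek : (0:ℚ) ≤ (k:ℚ)^2*((k:ℚ)-5) := mul_nonneg (sq_nonneg _) (by linarith)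
  have h1kpos2 : (0:ℚ) < 1/(k:ℚ) := by positivity
  have hscase : s = 1 ∨ s = 2 ∨ 3 ≤ s := by omega
  rcases hscase with hs1' | hs2' | hs3'
  · -- CASE s = 1
    have hgk2 : g = k - 1 := by omega
    have hbk : b = k - 1 := by omega
    have hGw : g ≤ ∑ C ∈ Gd, w C := by
      calc g = ∑ _C ∈ Gd, 1 := by rw [hg, Finset.card_eq_sum_ones]
        _ ≤ _ := Finset.sum_le_sum (fun C _ => hw_pos C)
    obtain ⟨Ca, hBdeq⟩ := Finset.card_eq_one.mp (by omega : Bd.card = 1)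
    have hCaB : Ca ∈ Bd := by rw [hBdeq]; exact Finset.mem_singleton_self _
    have hsumBa : ∑ C ∈ Bd, (w C:ℚ) = (w Ca:ℚ) := by rw [hBdeq, Finset.sum_singleton]
    have hbQ2 : (b:ℚ) = (k:ℚ) - 1 := by
      rw [hbk]; push_cast [Nat.cast_sub (by omega : 1 ≤ k)]; ring
    have hgQ2 : (g:ℚ) = (k:ℚ) - 1 := by
      rw [hgk2]; push_cast [Nat.cast_sub (by omega : 1 ≤ k)]; ring
    have hGwQ : (g:ℚ) ≤ ∑ C ∈ Gd, (w C:ℚ) := hSGw_ge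
    have hwCa : (w Ca:ℚ) ≤ (k:ℚ) - 1 := by
      have := hwsplitQ
      rw [hsumBa] at this
      linarith
    have he1 : q - (k:ℚ) ≤ (sz C1:ℚ) := by
      have := hbadw Ca hCaB
      linarith
    have hsQ1 : (s:ℚ) = 1 := by exact_mod_cast hs1'
    have he3 : ((k:ℚ)-1)*(sz C1:ℚ) + 1 ≤ (n:ℚ) := by
      rw [← hgQ2]
      linarith
    have he2 : 2*(n:ℚ) + 1 - (k:ℚ)^2 ≤ (k:ℚ)*(sz C1:ℚ) := by
      have h := mul_le_mul_of_nonneg_left he1 (le_of_lt hk0)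
      have hexp : (k:ℚ)*(q - (k:ℚ)) = (k:ℚ)*q - (k:ℚ)^2 := by ring
      rw [hexp, hkq] at h
      linarith
    rcases (by omega : n = k^2 + k ∨ k^2+k+1 ≤ n) with hneq | hnbig
    · have hnQ2 : (n:ℚ) = (k:ℚ)^2 + (k:ℚ) := by exact_mod_cast hneq
      have ha13 : (k:ℚ)+3 ≤ (sz C1:ℚ) := by
        by_contra hlt
        push_neg at hlt
        have hlt2 : sz C1 < k + 3 := by exact_mod_cast hlt
        have hle2 : (sz C1:ℚ) ≤ (k:ℚ)+2 := by
          have : sz C1 ≤ k + 2 := by omega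
          exact_mod_cast this
        have hmul := mul_le_mul_of_nonneg_left hle2 (le_of_lt hk0)
        nlinarith [he2, hnQ2]
      have hp := mul_le_mul_of_nonneg_left ha13 (by linarith : (0:ℚ) ≤ (k:ℚ)-1)
      nlinarith [he3, hp, hnQ2]
    · have hnbigQ : (k:ℚ)^2 + (k:ℚ) + 1 ≤ (n:ℚ) := by exact_mod_cast hnbig
      have hp1 : ((k:ℚ)-1)*(2*(n:ℚ)+1-(k:ℚ)^2) ≤ ((k:ℚ)-1)*((k:ℚ)*(sz C1:ℚ)) :=
        mul_le_mul_of_nonneg_left he2 (by linarith)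
      have hp2 : (k:ℚ)*(((k:ℚ)-1)*(sz C1:ℚ) + 1) ≤ (k:ℚ)*(n:ℚ) :=
        mul_le_mul_of_nonneg_left he3 (by linarith)
      have hp3 : ((k:ℚ)^2+(k:ℚ)+1)*((k:ℚ)-2) ≤ (n:ℚ)*((k:ℚ)-2) :=
        mul_le_mul_of_nonneg_right hnbigQ (by linarith)
      nlinarith [hp1, hp2, hp3]

  · -- CASE s = 2
    obtain ⟨Ca, Cb, hneab, hBdeq⟩ := Finset.card_eq_two.mp (by omega : Bd.card = 2)
    have hCaB : Ca ∈ Bd := by rw [hBdeq]; simp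
    have hCbB : Cb ∈ Bd := by rw [hBdeq]; simp
    have hsumB2 : ∑ C ∈ Bd, (w C:ℚ) = (w Ca:ℚ) + (w Cb:ℚ) := by
      rw [hBdeq, Finset.sum_pair hneab]
    have hma := hbadw Ca hCaB
    have hmb := hbadw Cb hCbB
    have hsQ2 : (s:ℚ) = 2 := by exact_mod_cast hs2'
    rcases (by omega : g = k-1 ∨ g = k-2) with hgeq | hgeq
    · have hgQ2 : (g:ℚ) = (k:ℚ) - 1 := by
        rw [hgeq]; push_cast [Nat.cast_sub (by omega : 1 ≤ k)]; ring
      have hbud : (w Ca:ℚ) + (w Cb:ℚ) ≤ (k:ℚ)+1 := by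
        have := hwB_le
        rw [hsumB2] at this
        linarith
      have ha1b : q - ((k:ℚ)+3)/2 ≤ (sz C1:ℚ) := by linarith
      have hn3 : ((k:ℚ)-1)*(sz C1:ℚ) + 2 ≤ (n:ℚ) := by
        rw [← hgQ2]
        linarith
      have hp2 : (k:ℚ)*(((k:ℚ)-1)*(sz C1:ℚ) + 2) ≤ (k:ℚ)*(n:ℚ) :=
        mul_le_mul_of_nonneg_left hn3 (by linarith)
      have hp1 : ((k:ℚ)-1)*((k:ℚ)*(q - ((k:ℚ)+3)/2)) ≤ ((k:ℚ)-1)*((k:ℚ)*(sz C1:ℚ)) :=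
        mul_le_mul_of_nonneg_left (mul_le_mul_of_nonneg_left ha1b (by linarith))
          (by linarith)
      have hkq2 : ((k:ℚ)-1)*((k:ℚ)*q) = ((k:ℚ)-1)*(2*(n:ℚ)+1) := by rw [hkq]
      have hp3 : ((k:ℚ)^2+(k:ℚ))*((k:ℚ)-2) ≤ (n:ℚ)*((k:ℚ)-2) :=
        mul_le_mul_of_nonneg_right hnQ (by linarith)
      linarith [hp1, hp2, hkq2, hp3, hsqk, hcubek]
    · -- g = k - 2
      have htk2 : t = k := by omega
      have hbk : b = k-1 := by omega
      have hGw : g ≤ ∑ C ∈ Gd, w C := by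
        calc g = ∑ _C ∈ Gd, 1 := by rw [hg, Finset.card_eq_sum_ones]
          _ ≤ _ := Finset.sum_le_sum (fun C _ => hw_pos C)
      have hsumBN : (∑ C ∈ Bd, w C) = w Ca + w Cb := by rw [hBdeq, Finset.sum_pair hneab]
      have hsplitN : ∑ C ∈ Gd, w C + ∑ C ∈ Bd, w C = 2*b := by
        rw [hBd, Finset.sum_add_sum_compl, hw_sum]
      have hbudN : w Ca + w Cb ≤ k := by omega
      have hmin1 := Nat.min_le_left (w Ca) (w Cb)
      have hmin2 := Nat.min_le_right (w Ca) (w Cb)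
      have hW0le : min (w Ca) (w Cb) ≤ k/2 := by omega
      have hW0Q : q - 1 - (sz C1:ℚ) ≤ ((min (w Ca) (w Cb) : ℕ):ℚ) := by
        rcases le_total (w Ca) (w Cb) with h | h
        · rw [min_eq_left h]; exact hma
        · rw [min_eq_right h]; exact hmb
      have hFQ : ((min (w Ca) (w Cb) : ℕ):ℚ) ≤ ((k/2 : ℕ):ℚ) := by exact_mod_cast hW0le
      have ha1F : q - 1 - ((k/2:ℕ):ℚ) ≤ (sz C1:ℚ) := by linarith
      have hk4 : (0:ℚ) < (k:ℚ) - 4 := by linarith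
      have hhn2' : ((k/2:ℕ):ℚ) * (k:ℚ) * ((k:ℚ)-2) + (k:ℚ)^2 - 5*(k:ℚ) + 3 ≤
          (n:ℚ)*((k:ℚ)-4) := by
        rw [div_le_iff₀ hk4] at hn2
        linarith
      have hgQ2 : (g:ℚ) = (k:ℚ) - 2 := by
        rw [hgeq]; push_cast [Nat.cast_sub (by omega : 2 ≤ k)]; ring
      have hn3 : ((k:ℚ)-2)*(sz C1:ℚ) + 2 ≤ (n:ℚ) := by
        rw [← hgQ2]
        linarith
      have hp2 : (k:ℚ)*(((k:ℚ)-2)*(sz C1:ℚ) + 2) ≤ (k:ℚ)*(n:ℚ) :=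
        mul_le_mul_of_nonneg_left hn3 (by linarith)
      have hp1 : ((k:ℚ)-2)*((k:ℚ)*(q - 1 - ((k/2:ℕ):ℚ))) ≤ ((k:ℚ)-2)*((k:ℚ)*(sz C1:ℚ)) :=
        mul_le_mul_of_nonneg_left (mul_le_mul_of_nonneg_left ha1F (by linarith))
          (by linarith)
      have hkq2 : ((k:ℚ)-2)*((k:ℚ)*q) = ((k:ℚ)-2)*(2*(n:ℚ)+1) := by rw [hkq]
      linarith [hp1, hp2, hkq2, hhn2']
  · -- CASE s ≥ 3
    have hSfB : Sf ⊆ Bd := by rw [hSf]; exact Finset.filter_subset _ _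
    have hw_not_Sf : ∀ C ∈ Bd \ Sf, q/2 - 1 ≤ (w C:ℚ) := by
      intro C hC
      rw [Finset.mem_sdiff] at hC
      have h2 := hC.2
      rw [hSf, Finset.mem_filter, not_and] at h2
      exact not_lt.mp (h2 hC.1)
    have hsum_sdiff : ∑ C ∈ Bd \ Sf, (w C:ℚ) + ∑ C ∈ Sf, (w C:ℚ) = ∑ C ∈ Bd, (w C:ℚ) :=
      Finset.sum_sdiff hSfB
    have hcardSf_le : Sf.card ≤ s := by rw [hs]; exact Finset.card_le_card hSfB
    have hcast1 : (((Bd \ Sf).card : ℕ):ℚ) = (s:ℚ) - (Sf.card:ℚ) := by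
      rw [Finset.card_sdiff_of_subset hSfB, hs]
      push_cast [Nat.cast_sub (show Sf.card ≤ Bd.card from hcardSf_le)]
      ring
    have hm'1 : (1:ℚ) ≤ max 1 (q - 1 - (sz C1:ℚ)) := le_max_left _ _
    have hm'le : ∀ C ∈ Bd, max 1 (q - 1 - (sz C1:ℚ)) ≤ (w C:ℚ) := fun C hC =>
      max_le (by exact_mod_cast hw_pos C) (hbadw C hC)
    have hsQ : (3:ℚ) ≤ (s:ℚ) := by exact_mod_cast hs3'
    have hcQ : (Sf.card:ℚ) ≤ 2 := by exact_mod_cast hSf2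
    have hcQ0 : (0:ℚ) ≤ (Sf.card:ℚ) := Nat.cast_nonneg _
    have hkeyB : ((s:ℚ)-2)*(q/2-1) + 2*(max 1 (q - 1 - (sz C1:ℚ))) ≤
        ∑ C ∈ Bd, (w C:ℚ) := by
      by_cases hmq : max 1 (q - 1 - (sz C1:ℚ)) ≤ q/2 - 1
      · have hlow1 : ((Bd \ Sf).card) • (q/2-1) ≤ ∑ C ∈ Bd \ Sf, (w C:ℚ) :=
          Finset.card_nsmul_le_sum _ _ _ hw_not_Sf
        have hlowSf : (Sf.card) • (max 1 (q - 1 - (sz C1:ℚ))) ≤ ∑ C ∈ Sf, (w C:ℚ) :=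
          Finset.card_nsmul_le_sum _ _ _ (fun C hC => hm'le C (hSfB hC))
        rw [nsmul_eq_mul] at hlow1 hlowSf
        rw [hcast1] at hlow1
        have hprod : (0:ℚ) ≤ (2 - (Sf.card:ℚ)) * ((q/2-1) - max 1 (q - 1 - (sz C1:ℚ))) :=
          mul_nonneg (by linarith) (by linarith)
        linarith [hlow1, hlowSf, hsum_sdiff, hprod]
      · push_neg at hmq
        have hall : (Bd.card) • (max 1 (q - 1 - (sz C1:ℚ))) ≤ ∑ C ∈ Bd, (w C:ℚ) :=
          Finset.card_nsmul_le_sum _ _ _ hm'le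
        rw [nsmul_eq_mul, ← hs] at hall
        have hprod : (0:ℚ) ≤ ((s:ℚ) - 2) * ((max 1 (q - 1 - (sz C1:ℚ))) - (q/2-1)) :=
          mul_nonneg (by linarith) (by linarith)
        linarith [hall, hprod]
    have hgQle : (g:ℚ) ≤ (k:ℚ) - 1 := by
      have : ((g:ℚ)+1) ≤ (k:ℚ) := by exact_mod_cast hgk1
      linarith
    have hq2k : (k:ℚ)+1 ≤ q/2 := by linarith
    have hs3e : s = 3 := by
      by_contra hne3
      have hs4 : (4:ℚ) ≤ (s:ℚ) := by
        have : 4 ≤ s := by omega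
        exact_mod_cast this
      have hp := mul_le_mul_of_nonneg_right (by linarith : (2:ℚ) ≤ (s:ℚ)-2)
        (by linarith : (0:ℚ) ≤ q/2 - 3)
      linarith [hkeyB, hwB_le, hm'1, hp]
    have hsQ3 : (s:ℚ) = 3 := by exact_mod_cast hs3e
    have hkey3 : q/2 - 1 + 2*(max 1 (q - 1 - (sz C1:ℚ))) ≤ (g:ℚ) + 4 := by
      have h1 := hkeyB
      have h2 := hwB_le
      rw [hsQ3] at h1 h2
      linarith
    have hgke : g = k-1 := by
      have h2 : q/2 ≤ (g:ℚ) + 3 := by linarith [hm'1, hkey3]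
      have h3 : ((k:ℚ)) - 2 < (g:ℚ) := by linarith
      have h4 : k - 2 < g := by
        by_contra h
        push_neg at h
        have : (g:ℚ) ≤ ((k-2:ℕ):ℚ) := by exact_mod_cast h
        have : ((k-2:ℕ):ℚ) = (k:ℚ)-2 := by push_cast [Nat.cast_sub (by omega : 2 ≤ k)]; ring
        linarith
      omega
    have hgQe : (g:ℚ) = (k:ℚ)-1 := by
      rw [hgke]; push_cast [Nat.cast_sub (by omega : 1 ≤ k)]; ring
    have ha1b : q - 5/2 ≤ (sz C1:ℚ) := by
      have h1 : 2*(max 1 (q - 1 - (sz C1:ℚ))) ≤ (g:ℚ) + 5 - q/2 := by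
        linarith [hkey3]
      have h2 : max 1 (q - 1 - (sz C1:ℚ)) < 3/2 := by
        rw [hgQe] at h1
        linarith
      have h3 : q - 1 - (sz C1:ℚ) ≤ max 1 (q - 1 - (sz C1:ℚ)) := le_max_right _ _
      linarith
    have hn3 : ((k:ℚ)-1)*(sz C1:ℚ) + 3 ≤ (n:ℚ) := by
      rw [← hgQe]
      linarith
    have hp2 : (k:ℚ)*(((k:ℚ)-1)*(sz C1:ℚ) + 3) ≤ (k:ℚ)*(n:ℚ) :=
      mul_le_mul_of_nonneg_left hn3 (by linarith)
    have hp1 : ((k:ℚ)-1)*((k:ℚ)*(q - 5/2)) ≤ ((k:ℚ)-1)*((k:ℚ)*(sz C1:ℚ)) :=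
      mul_le_mul_of_nonneg_left (mul_le_mul_of_nonneg_left ha1b (by linarith))
        (by linarith)
    have hkq2 : ((k:ℚ)-1)*((k:ℚ)*q) = ((k:ℚ)-1)*(2*(n:ℚ)+1) := by rw [hkq]
    have hp3 : ((k:ℚ)^2+(k:ℚ))*((k:ℚ)-2) ≤ (n:ℚ)*((k:ℚ)-2) :=
      mul_le_mul_of_nonneg_right hnQ (by linarith)
    linarith [hp1, hp2, hkq2, hp3, hsqk, hcubek]

end Stmt3Aux

theorem stmt_3 {V : Type*} [Fintype V] (G : SimpleGraph V) (k : ℕ) (hk : 5 ≤ k)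
    (hn1 : k ^ 2 + k ≤ Fintype.card V)
    (hn2 : (((k / 2 : ℕ) : ℚ) * k * ((k : ℚ) - 2) + (k : ℚ) ^ 2 - 5 * k + 3) / ((k : ℚ) - 4)
      ≤ (Fintype.card V : ℚ))
    (hG : G.Connected)
    (hdeg : ∀ x y : V, x ≠ y → ¬G.Adj x y →
      (2 * (Fintype.card V : ℚ) - 2 * k + 1) / k ≤ (vdeg G x : ℚ) + (vdeg G y : ℚ)) :
    {e : Sym2 V | G.IsBridge e}.ncard ≤ k - 2 :=
  stmt_3' G k hk hn1 hn2 hG (fun x y h1 h2 => by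
    simpa only [vdeg] using hdeg x y h1 h2)
end

section
/- For every k ≥ 5 there exists a connected graph D on n = k²+k−1 vertices such that deg(x)+deg(y) ≥ (2n−2k+1)/k for every pair of non-adjacent vertices x and y, and D has exactly k−1 cut edges. (Construction: a vertex v₀ joined by k−1 cut edges to k−1 disjoint complete graphs on k+2 vertices.) -/
open SimpleGraph

def cliqueStar (m n : ℕ) : SimpleGraph (Option (Fin m × Fin (n+1))) where
  Adj u v := match u, v with
    | some (i,a), some (j,b) => i = j ∧ a ≠ b
    | some (_,a), none => a = 0
    | none, some (_,b) => b = 0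
    | none, none => False
  symm := ⟨by rintro (_|⟨i,a⟩) (_|⟨j,b⟩) h <;> simp_all <;> tauto⟩
  loopless := ⟨by rintro (_|⟨i,a⟩) h <;> simp_all⟩

@[simp] lemma cs_adj_ss {m n : ℕ} {i j : Fin m} {a b : Fin (n+1)} :
    (cliqueStar m n).Adj (some (i,a)) (some (j,b)) ↔ i = j ∧ a ≠ b := Iff.rfl
@[simp] lemma cs_adj_ns {m n : ℕ} {j : Fin m} {b : Fin (n+1)} :
    (cliqueStar m n).Adj none (some (j,b)) ↔ b = 0 := Iff.rfl
@[simp] lemma cs_adj_sn {m n : ℕ} {i : Fin m} {a : Fin (n+1)} :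
    (cliqueStar m n).Adj (some (i,a)) none ↔ a = 0 := Iff.rfl
@[simp] lemma cs_adj_nn {m n : ℕ} : ¬ (cliqueStar m n).Adj none none := fun h => h

lemma cs_conn (m n : ℕ) : (cliqueStar m n).Connected := by
  have hr : ∀ v : Option (Fin m × Fin (n+1)), (cliqueStar m n).Reachable none v := by
    rintro (_|⟨i,a⟩)
    · rfl
    · refine (Adj.reachable (by simp)).trans (v := some (i, 0)) ?_
      by_cases h : a = 0
      · subst h; rfl
      · exact Adj.reachable (by simp [Ne.symm h])
  exact ⟨fun u v => (hr u).symm.trans (hr v)⟩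

lemma vdeg_ge {V : Type*} [Fintype V] (G : SimpleGraph V) (v : V) (s : Finset V)
    (hs : ↑s ⊆ G.neighborSet v) : s.card ≤ vdeg G v := by
  rw [vdeg, ← Set.ncard_coe_finset]
  exact Set.ncard_le_ncard hs (Set.toFinite _)

lemma vdeg_none (m n : ℕ) : m ≤ vdeg (cliqueStar m n) none := by
  have := vdeg_ge (cliqueStar m n) none
    (Finset.univ.image (fun j : Fin m => some (j, (0:Fin (n+1))))) ?_
  · rwa [Finset.card_image_of_injective _ (by intro x y h; simpa using h),
      Finset.card_univ, Fintype.card_fin] at this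
  · rintro x hx
    simp only [Finset.coe_image, Set.mem_image] at hx
    obtain ⟨j, _, rfl⟩ := hx
    simp [mem_neighborSet]

lemma vdeg_some (m n : ℕ) (i : Fin m) (a : Fin (n+1)) :
    n ≤ vdeg (cliqueStar m n) (some (i,a)) := by
  have := vdeg_ge (cliqueStar m n) (some (i,a))
    ((Finset.univ.erase a).image (fun b : Fin (n+1) => some (i, b))) ?_
  · rwa [Finset.card_image_of_injective _ (by intro x y h; simpa using h),
      Finset.card_erase_of_mem (Finset.mem_univ a), Finset.card_univ, Fintype.card_fin,
      Nat.add_sub_cancel] at this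
  · rintro x hx
    simp only [Finset.coe_image, Set.mem_image, Finset.coe_erase, Set.mem_diff] at hx
    obtain ⟨b, ⟨_, hb⟩, rfl⟩ := hx
    simp only [Set.mem_singleton_iff] at hb
    simpa [mem_neighborSet] using fun h : a = b => hb h.symm

lemma cs_walk_cross {m n : ℕ} (i : Fin m) : ∀ {u v : Option (Fin m × Fin (n+1))}
    (w : (cliqueStar m n).Walk u v), (∀ a, u ≠ some (i,a)) → (∃ a, v = some (i,a)) →
    s(none, (some (i,(0:Fin (n+1))) : Option (Fin m × Fin (n+1)))) ∈ w.edges := by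
  intro u v w
  induction w with
  | nil => rintro h ⟨a, rfl⟩; exact absurd rfl (h a)
  | @cons u b v h w ih =>
    intro hu hv
    by_cases hb : ∃ a, b = some (i,a)
    · obtain ⟨a, rfl⟩ := hb
      -- u is adjacent to some (i,a) and u is not in clique i
      match u, h with
      | none, h =>
        simp only [cs_adj_ns] at h
        subst h
        simp [Walk.edges_cons]
      | some (j,c), h =>
        simp only [cs_adj_ss] at h
        exact absurd rfl (h.1 ▸ hu c)
    · simp only [Walk.edges_cons, List.mem_cons]
      exact Or.inr (ih (fun a ha => hb ⟨a, ha⟩) hv)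

lemma cs_bridge {m n : ℕ} (i : Fin m) :
    (cliqueStar m n).IsBridge s(none, (some (i,(0:Fin (n+1))) : Option (Fin m × Fin (n+1)))) := by
  rw [isBridge_iff_adj_and_forall_walk_mem_edges]
  refine fun p => ?_
  exact cs_walk_cross i p (by simp) ⟨0, rfl⟩

lemma cs_not_bridge {m n : ℕ} (hn : 2 ≤ n) (i : Fin m) (a b : Fin (n+1)) (hab : a ≠ b) :
    ¬ (cliqueStar m n).IsBridge s(some (i,a), some (i,b)) := by
  intro h
  rw [isBridge_iff_adj_and_forall_walk_mem_edges] at h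
  have hall := h
  -- find c distinct from a and b
  have hpos : 0 < (Finset.univ \ {a, b} : Finset (Fin (n+1))).card := by
    have h1 := Finset.le_card_sdiff ({a, b} : Finset (Fin (n+1))) Finset.univ
    have h2 : ({a, b} : Finset (Fin (n+1))).card ≤ 2 :=
      (Finset.card_insert_le _ _).trans (by simp)
    have h3 : (Finset.univ : Finset (Fin (n+1))).card = n + 1 := by simp
    omega
  obtain ⟨c, hc⟩ := Finset.card_pos.mp hpos
  simp only [Finset.mem_sdiff, Finset.mem_univ, Finset.mem_insert, Finset.mem_singleton,
    true_and, not_or] at hc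
  obtain ⟨hca, hcb⟩ := hc
  -- walk a → c → b avoiding the edge
  have h1 : (cliqueStar m n).Adj (some (i,a)) (some (i,c)) := by
    simpa using fun h : a = c => hca h.symm
  have h2 : (cliqueStar m n).Adj (some (i,c)) (some (i,b)) := by simp [hcb]
  have := hall (Walk.cons h1 (Walk.cons h2 Walk.nil))
  simp only [Walk.edges_cons, Walk.edges_nil, List.mem_cons, List.not_mem_nil, or_false] at this
  rcases this with h | h <;> rw [Sym2.eq_iff] at h <;>
    rcases h with ⟨h1', h2'⟩ | ⟨h1', h2'⟩ <;> simp_all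

lemma cs_bridgeSet {m n : ℕ} (hn : 2 ≤ n) :
    {e | (cliqueStar m n).IsBridge e} =
      (fun i : Fin m => s((none : Option (Fin m × Fin (n+1))), some (i,(0:Fin (n+1))))) ''
        Set.univ := by
  ext e
  induction e using Sym2.ind with
  | _ u v =>
    simp only [Set.mem_setOf_eq, Set.image_univ, Set.mem_range]
    constructor
    · intro hb
      have hadj : (cliqueStar m n).Adj u v := (IsBridge.reachable_iff_adj (G := cliqueStar m n) (u := u) (v := v) hb).mp
        ((cs_conn m n).preconnected u v)
      match u, v with
      | none, none => simp at hadj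
      | none, some (j,b) =>
        simp only [cs_adj_ns] at hadj; subst hadj; exact ⟨j, rfl⟩
      | some (i,a), none =>
        simp only [cs_adj_sn] at hadj; subst hadj
        exact ⟨i, Sym2.eq_swap⟩
      | some (i,a), some (j,b) =>
        obtain ⟨rfl, hab⟩ := hadj
        exact absurd hb (cs_not_bridge hn i a b hab)
    · rintro ⟨i, h⟩
      rw [← h]
      exact cs_bridge i

lemma cs_bridgeCard {m n : ℕ} (hn : 2 ≤ n) :
    {e | (cliqueStar m n).IsBridge e}.ncard = m := by
  rw [cs_bridgeSet hn, Set.ncard_image_of_injective _ ?_, Set.ncard_univ, Nat.card_eq_fintype_card,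
    Fintype.card_fin]
  intro i j h
  rw [Sym2.eq_iff] at h
  rcases h with ⟨-, h⟩ | ⟨h, -⟩ <;> simp_all

theorem stmt_4 (k : ℕ) (hk : 5 ≤ k) :
    ∃ (V : Type) (_ : Fintype V) (D : SimpleGraph V),
      Fintype.card V = k ^ 2 + k - 1 ∧ D.Connected ∧
      (∀ x y : V, x ≠ y → ¬D.Adj x y →
        (2 * (Fintype.card V : ℚ) - 2 * k + 1) / k ≤ (vdeg D x : ℚ) + (vdeg D y : ℚ)) ∧
      {e : Sym2 V | D.IsBridge e}.ncard = k - 1 := by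
  obtain ⟨a, rfl⟩ : ∃ a, k = a + 5 := ⟨k - 5, by omega⟩
  refine ⟨Option (Fin (a+4) × Fin (a+6+1)), inferInstance, cliqueStar (a+4) (a+6), ?_, ?_, ?_, ?_⟩
  · have hcard : Fintype.card (Option (Fin (a+4) × Fin (a+6+1))) = (a+4) * (a+7) + 1 := by
      simp [Fintype.card_option, Fintype.card_prod]
    have h1 : (a+5)^2 = a^2 + 10*a + 25 := by ring
    have h2 : (a+4)*(a+7) = a^2 + 11*a + 28 := by ring
    omega
  · exact cs_conn _ _
  · intro x y hxy hnadj
    have hcard : Fintype.card (Option (Fin (a+4) × Fin (a+6+1))) = (a+4) * (a+7) + 1 := by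
      simp [Fintype.card_option, Fintype.card_prod]
    have hsum : 2 * (a+5) ≤ vdeg (cliqueStar (a+4) (a+6)) x + vdeg (cliqueStar (a+4) (a+6)) y := by
      match x, y with
      | none, none => exact absurd rfl hxy
      | none, some (i,b) =>
        have h1 := vdeg_none (a+4) (a+6)
        have h2 := vdeg_some (a+4) (a+6) i b
        omega
      | some (i,b), none =>
        have h1 := vdeg_none (a+4) (a+6)
        have h2 := vdeg_some (a+4) (a+6) i b
        omega
      | some (i,c), some (j,b) =>
        have h1 := vdeg_some (a+4) (a+6) i c
        have h2 := vdeg_some (a+4) (a+6) j b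
        omega
    have hsumQ : (2 * (a+5) : ℚ) ≤ (vdeg (cliqueStar (a+4) (a+6)) x : ℚ) +
        (vdeg (cliqueStar (a+4) (a+6)) y : ℚ) := by exact_mod_cast hsum
    refine le_trans ?_ hsumQ
    rw [hcard]
    have hk0 : (0:ℚ) < ((a:ℚ)+5) := by positivity
    rw [div_le_iff₀ (by push_cast; linarith)]
    push_cast
    have ha : (0:ℚ) ≤ (a:ℚ) := by positivity
    nlinarith [sq_nonneg ((a:ℚ))]
  · have := cs_bridgeCard (m := a+4) (n := a+6) (by omega)
    rw [this]
    omega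
end

section
/- If P is a path with n edges, then the conflict-free connection number of P equals ⌈log₂(n+1)⌉. -/
open SimpleGraph

namespace CFCAux

open List SimpleGraph.Walk

/-! ### Generic list helpers -/

lemma exists_of_filter_length_one {α} {l : List α} {p : α → Bool}
    (h : (l.filter p).length = 1) :
    ∃ x, x ∈ l ∧ p x ∧ ∀ y ∈ l, p y → y = x := by
  obtain ⟨x, hx⟩ := List.length_eq_one_iff.mp h
  have hxm : x ∈ l.filter p := by rw [hx]; exact List.mem_singleton_self x
  rw [List.mem_filter] at hxm
  refine ⟨x, hxm.1, hxm.2, ?_⟩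
  intro y hy hpy
  have : y ∈ l.filter p := List.mem_filter.mpr ⟨hy, hpy⟩
  rw [hx] at this
  exact List.mem_singleton.mp this

lemma filter_length_one_of {α} {l : List α} {p : α → Bool} {x : α}
    (hnd : l.Nodup) (hx : x ∈ l) (hpx : p x) (huniq : ∀ y ∈ l, p y → y = x) :
    (l.filter p).length = 1 := by
  have hnd' : (l.filter p).Nodup := hnd.filter p
  have hxm : x ∈ l.filter p := List.mem_filter.mpr ⟨hx, hpx⟩
  have hall : ∀ y ∈ l.filter p, y = x := by
    intro y hy
    rw [List.mem_filter] at hy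
    exact huniq y hy.1 hy.2
  rcases hl : l.filter p with _ | ⟨a, _ | ⟨b, t⟩⟩
  · rw [hl] at hxm; simp at hxm
  · rfl
  · exfalso
    rw [hl] at hall hnd'
    have ha : a = x := hall a (by simp)
    have hb : b = x := hall b (by simp)
    rw [List.nodup_cons] at hnd'
    exact hnd'.1 (by simp [ha, hb])

/-! ### Number theory: the unique element of maximal 2-adic valuation -/

lemma exists_between_of_two_vals {x y m : ℕ} (hx : 0 < x) (hxy : x < y)
    (hvx : padicValNat 2 x = m) (hvy : padicValNat 2 y = m) :
    ∃ z, x < z ∧ z ≤ y ∧ m + 1 ≤ padicValNat 2 z := by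
  have hxne : x ≠ 0 := hx.ne'
  have hyne : y ≠ 0 := by omega
  have hdx : (2 : ℕ) ^ m ∣ x := hvx ▸ pow_padicValNat_dvd
  have hdy : (2 : ℕ) ^ m ∣ y := hvy ▸ pow_padicValNat_dvd
  obtain ⟨c, hc⟩ := hdx
  obtain ⟨d, hd⟩ := hdy
  have hpow : 0 < (2 : ℕ) ^ m := pow_pos (by norm_num) m
  have hcodd : ¬ (2 ∣ c) := by
    intro ⟨e, he⟩
    have : (2 : ℕ) ^ (m + 1) ∣ x := ⟨e, by rw [hc, he]; ring⟩
    rw [padicValNat_dvd_iff] at this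
    omega
  have hcd : c < d := by
    by_contra hcd
    push_neg at hcd
    have := Nat.mul_le_mul_left ((2:ℕ)^m) hcd
    omega
  refine ⟨2 ^ m * (c + 1), ?_, ?_, ?_⟩
  · rw [hc]; exact Nat.mul_lt_mul_of_pos_left (by omega) hpow
  · rw [hd]; exact Nat.mul_le_mul_left _ (by omega)
  · have h2 : 2 ∣ c + 1 := by omega
    obtain ⟨e, he⟩ := h2
    have : (2 : ℕ) ^ (m + 1) ∣ 2 ^ m * (c + 1) := ⟨e, by rw [he]; ring⟩
    rw [padicValNat_dvd_iff] at this
    rcases this with h | h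
    · exfalso; have : 0 < 2 ^ m * (c + 1) := Nat.mul_pos hpow (by omega); omega
    · exact h

lemma exists_good_color (a k : ℕ) (hk : 0 < k) :
    ∃ m, ((List.range' a k).filter (fun i => decide (padicValNat 2 (i + 1) = m))).length = 1 := by
  have hTne : (Finset.Ico (a + 1) (a + 1 + k)).Nonempty := by
    rw [Finset.nonempty_Ico]; omega
  obtain ⟨x, hxT, hxmax⟩ := Finset.exists_max_image (Finset.Ico (a + 1) (a + 1 + k))
    (padicValNat 2) hTne
  rw [Finset.mem_Ico] at hxT
  set m := padicValNat 2 x with hm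
  refine ⟨m, filter_length_one_of List.nodup_range' (x := x - 1) ?_ ?_ ?_⟩
  · rw [List.mem_range'_1]; omega
  · have : x - 1 + 1 = x := by omega
    rw [this]; simp [hm]
  · intro y hy hpy
    rw [List.mem_range'_1] at hy
    simp only [decide_eq_true_eq] at hpy
    by_contra hne
    have hyx : y + 1 ≠ x := by omega
    have hy1T : a + 1 ≤ y + 1 ∧ y + 1 < a + 1 + k := by omega
    rcases Nat.lt_or_ge (y + 1) x with h | h
    · obtain ⟨z, hz1, hz2, hz3⟩ := exists_between_of_two_vals (by omega) h hpy hm.symm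
      have hzmem : z ∈ Finset.Ico (a + 1) (a + 1 + k) := by
        rw [Finset.mem_Ico]; omega
      have := hxmax z hzmem
      omega
    · have h' : x < y + 1 := by omega
      obtain ⟨z, hz1, hz2, hz3⟩ := exists_between_of_two_vals (by omega) h' hm.symm hpy
      have hzmem : z ∈ Finset.Ico (a + 1) (a + 1 + k) := by
        rw [Finset.mem_Ico]; omega
      have := hxmax z hzmem
      omega

/-! ### The combinatorial lower bound -/

lemma interval_bound : ∀ (k : ℕ) (g : ℕ → ℕ) (S : Finset ℕ), S.card ≤ k → ∀ a b : ℕ, a ≤ b →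
    (∀ i, a ≤ i → i < b → g i ∈ S) →
    (∀ a' b', a ≤ a' → a' < b' → b' ≤ b →
      ∃ col, ((List.range' a' (b' - a')).filter (fun i => decide (g i = col))).length = 1) →
    b - a ≤ 2 ^ k - 1 := by
  intro k
  induction k with
  | zero =>
    intro g S hS a b hab hmem hprop
    by_contra h
    have hab' : a < b := by omega
    obtain ⟨col, hcol⟩ := hprop a b le_rfl hab' le_rfl
    obtain ⟨i₀, hi₀l, hpi₀, _⟩ := exists_of_filter_length_one hcol
    rw [List.mem_range'_1] at hi₀l
    have : g i₀ ∈ S := hmem i₀ (by omega) (by omega)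
    have : S.Nonempty := ⟨_, this⟩
    rw [← Finset.card_pos] at this
    omega
  | succ k ih =>
    intro g S hS a b hab hmem hprop
    rcases Nat.eq_or_lt_of_le hab with heq | hab'
    · omega
    obtain ⟨col, hcol⟩ := hprop a b le_rfl hab' le_rfl
    obtain ⟨i₀, hi₀l, hpi₀, huniq⟩ := exists_of_filter_length_one hcol
    rw [List.mem_range'_1] at hi₀l
    have hi₀1 : a ≤ i₀ := hi₀l.1
    have hi₀2 : i₀ < b := by omega
    simp only [decide_eq_true_eq] at hpi₀
    have hcolS : col ∈ S := hpi₀ ▸ hmem i₀ hi₀1 hi₀2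
    have hScard : (S.erase col).card ≤ k := by
      rw [Finset.card_erase_of_mem hcolS]; omega
    have huniq' : ∀ y, a ≤ y → y < b → g y = col → y = i₀ := by
      intro y h1 h2 h3
      apply huniq y
      · rw [List.mem_range'_1]; omega
      · simp [h3]
    have hleft : i₀ - a ≤ 2 ^ k - 1 := by
      apply ih g (S.erase col) hScard a i₀ hi₀1
      · intro i h1 h2
        refine Finset.mem_erase.mpr ⟨?_, hmem i h1 (by omega)⟩
        intro hgi
        have := huniq' i h1 (by omega) hgi
        omega
      · intro a' b' h1 h2 h3
        exact hprop a' b' h1 h2 (by omega)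
    have hright : b - (i₀ + 1) ≤ 2 ^ k - 1 := by
      apply ih g (S.erase col) hScard (i₀ + 1) b (by omega)
      · intro i h1 h2
        refine Finset.mem_erase.mpr ⟨?_, hmem i (by omega) h2⟩
        intro hgi
        have := huniq' i (by omega) h2 hgi
        omega
      · intro a' b' h1 h2 h3
        exact hprop a' b' (by omega) h2 h3
    have hp : 2 ^ (k + 1) = 2 * 2 ^ k := by rw [pow_succ]; ring
    have hp1 : 1 ≤ 2 ^ k := Nat.one_le_two_pow
    omega

/-! ### The path graph: canonical vertices, edges and walks -/

variable (n : ℕ)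

def vtx (i : ℕ) : Fin (n + 1) := ⟨i % (n + 1), Nat.mod_lt _ n.succ_pos⟩

lemma vtx_val {i : ℕ} (h : i ≤ n) : (vtx n i).val = i :=
  Nat.mod_eq_of_lt (Nat.lt_succ_of_le h)

lemma vtx_adj {i : ℕ} (h : i < n) :
    (SimpleGraph.pathGraph (n + 1)).Adj (vtx n i) (vtx n (i + 1)) := by
  rw [pathGraph_adj]
  left
  rw [vtx_val n (by omega), vtx_val n (by omega)]

/-- the edge between `i` and `i+1`. -/
def edg (i : ℕ) : Sym2 (Fin (n + 1)) := s(vtx n i, vtx n (i + 1))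

lemma edg_mem {i : ℕ} (h : i < n) :
    edg n i ∈ (SimpleGraph.pathGraph (n + 1)).edgeSet := by
  rw [edg, SimpleGraph.mem_edgeSet]
  exact vtx_adj n h

/-- The monotone walk from `a` to `a + k`. -/
def walkUp : (a k : ℕ) → a + k ≤ n → (SimpleGraph.pathGraph (n + 1)).Walk (vtx n a) (vtx n (a + k))
  | _, 0, _ => SimpleGraph.Walk.nil
  | a, k + 1, h => (walkUp a k (by omega)).concat (vtx_adj n (by omega))

lemma walkUp_support (a k : ℕ) (h : a + k ≤ n) :
    (walkUp n a k h).support = (List.range' a (k + 1)).map (vtx n) := by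
  induction k with
  | zero => simp [walkUp]
  | succ k ih =>
    rw [walkUp, SimpleGraph.Walk.support_concat, ih (by omega)]
    conv_rhs => rw [List.range'_1_concat (s := a) (n := k + 1)]
    simp [List.concat_eq_append]

lemma walkUp_edges (a k : ℕ) (h : a + k ≤ n) :
    (walkUp n a k h).edges = (List.range' a k).map (edg n) := by
  induction k with
  | zero => simp [walkUp]
  | succ k ih =>
    rw [walkUp, SimpleGraph.Walk.edges_concat, ih (by omega)]
    conv_rhs => rw [List.range'_1_concat (s := a) (n := k)]
    simp only [List.concat_eq_append, List.map_append, List.map_cons, List.map_nil]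
    rfl

lemma walkUp_isPath (a k : ℕ) (h : a + k ≤ n) : (walkUp n a k h).IsPath := by
  rw [SimpleGraph.Walk.isPath_def, walkUp_support n a k h]
  apply List.Nodup.map_on _ List.nodup_range'
  intro x hx y hy hxy
  rw [List.mem_range'_1] at hx hy
  have hx' : (vtx n x).val = x := vtx_val n (by omega)
  have hy' : (vtx n y).val = y := vtx_val n (by omega)
  rw [← hx', ← hy', hxy]

/-! ### Uniqueness of paths in the path graph -/

lemma mem_support_of_between {x y : Fin (n + 1)} (m : Fin (n + 1))
    (w : (SimpleGraph.pathGraph (n + 1)).Walk x y) :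
    x.val ≤ m.val → m.val ≤ y.val → m ∈ w.support := by
  induction w with
  | nil =>
    intro h1 h2
    have : _ = m := Fin.ext (Nat.le_antisymm h1 h2)
    rw [← this]; simp
  | @cons u z v hadj q ih =>
    intro h1 h2
    rcases Nat.eq_or_lt_of_le h1 with heq | hlt
    · have : u = m := Fin.ext heq
      rw [← this]; simp
    · rw [pathGraph_adj] at hadj
      have hz : z.val ≤ m.val := by omega
      simp [ih hz h2]

lemma path_edges_eq {u v : Fin (n + 1)} (p : (SimpleGraph.pathGraph (n + 1)).Walk u v)
    (hp : p.IsPath) (huv : u.val ≤ v.val) :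
    p.edges = (List.range' u.val (v.val - u.val)).map (edg n) := by
  induction p with
  | nil => simp
  | @cons u z v hadj q ih =>
    rw [SimpleGraph.Walk.cons_isPath_iff] at hp
    have hzq := hp.1
    have hus := hp.2
    have huv' : u.val < v.val := by
      rcases Nat.eq_or_lt_of_le huv with heq | h
      · exfalso
        have : u = v := Fin.ext heq
        subst this
        exact hus (SimpleGraph.Walk.end_mem_support q)
      · exact h
    rw [pathGraph_adj] at hadj
    rcases hadj with hadj | hadj
    · -- z = u + 1
      have hzv : z.val = u.val + 1 := hadj.symm
      have hvn : v.val ≤ n := by omega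
      have hz : z.val ≤ v.val := by omega
      have hq := ih hzq hz
      rw [hzv] at hq
      have hzval : z = vtx n (u.val + 1) := by
        apply Fin.ext
        rw [vtx_val n (by omega)]
        omega
      have hu : u = vtx n u.val := Fin.ext (vtx_val n (by omega)).symm
      have he1 : edg n u.val = s(u, z) := by rw [edg, ← hu, ← hzval]
      have hsplit : v.val - u.val = (v.val - (u.val + 1)) + 1 := by omega
      rw [SimpleGraph.Walk.edges_cons, hq, hsplit, List.range'_succ, List.map_cons, he1]
    · -- z + 1 = u : impossible, u would be in q's support
      exfalso
      apply hus
      apply mem_support_of_between n u q (by omega) (by omega)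

/-! ### The coloring -/

def pcol : Sym2 (Fin (n + 1)) → ℕ :=
  Sym2.lift ⟨fun x y => padicValNat 2 (max x.val y.val), fun x y => by
    simp [Nat.max_comm]⟩

lemma pcol_edg {i : ℕ} (h : i < n) : pcol n (edg n i) = padicValNat 2 (i + 1) := by
  rw [edg, pcol, Sym2.lift_mk]
  simp only []
  rw [vtx_val n (by omega), vtx_val n (by omega)]
  congr 1
  omega

lemma pcol_lt {e : Sym2 (Fin (n + 1))} (he : e ∈ (SimpleGraph.pathGraph (n + 1)).edgeSet) :
    pcol n e < Nat.clog 2 (n + 1) := by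
  induction e with
  | _ x y =>
    rw [SimpleGraph.mem_edgeSet, pathGraph_adj] at he
    have hmax : 1 ≤ max x.val y.val ∧ max x.val y.val ≤ n := by
      have hx := x.isLt
      have hy := y.isLt
      omega
    rw [pcol, Sym2.lift_mk]
    simp only []
    set t := max x.val y.val with ht
    have h1 : (2 : ℕ) ^ padicValNat 2 t ∣ t := pow_padicValNat_dvd
    have h2 : (2 : ℕ) ^ padicValNat 2 t ≤ t := Nat.le_of_dvd (by omega) h1
    have h3 : n + 1 ≤ 2 ^ Nat.clog 2 (n + 1) := Nat.le_pow_clog (by norm_num) _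
    have : (2 : ℕ) ^ padicValNat 2 t < 2 ^ Nat.clog 2 (n + 1) := by omega
    exact (Nat.pow_lt_pow_iff_right (by norm_num)).mp this

lemma pcol_cfc : IsCFConnected (SimpleGraph.pathGraph (n + 1)) (pcol n) := by
  have key : ∀ u v : Fin (n + 1), u.val < v.val →
      ∃ p : (SimpleGraph.pathGraph (n + 1)).Walk u v, p.IsPath ∧
        ∃ col : ℕ, (p.edges.filter (fun e => pcol n e = col)).length = 1 := by
    intro u v huv
    set a := u.val with ha
    set k := v.val - u.val with hk
    have hk0 : 0 < k := by omega
    have hak : a + k ≤ n := by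
      have := v.isLt
      omega
    have hu : vtx n a = u := Fin.ext (vtx_val n (by omega))
    have hv : vtx n (a + k) = v := by
      apply Fin.ext
      rw [vtx_val n (by omega)]
      omega
    refine ⟨(walkUp n a k hak).copy hu hv, ?_, ?_⟩
    · rw [SimpleGraph.Walk.isPath_copy]
      exact walkUp_isPath n a k hak
    · obtain ⟨m, hm⟩ := exists_good_color a k hk0
      refine ⟨m, ?_⟩
      rw [SimpleGraph.Walk.edges_copy, walkUp_edges n a k hak, List.filter_map,
        List.length_map]
      have hcongr : ∀ i ∈ List.range' a k,
          ((fun e => decide (pcol n e = m)) ∘ edg n) i = decide (padicValNat 2 (i + 1) = m) := by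
        intro i hi
        rw [List.mem_range'_1] at hi
        simp only [Function.comp_apply]
        rw [pcol_edg n (by omega)]
      rw [List.filter_congr hcongr]
      exact hm
  intro u v huv
  rcases Nat.lt_or_ge u.val v.val with h | h
  · exact key u v h
  · have h' : v.val < u.val := by
      rcases Nat.eq_or_lt_of_le h with heq | h
      · exact absurd (Fin.ext heq.symm) huv
      · exact h
    obtain ⟨p, hp, col, hcol⟩ := key v u h'
    refine ⟨p.reverse, hp.reverse, col, ?_⟩
    rw [SimpleGraph.Walk.edges_reverse, List.filter_reverse, List.length_reverse]
    exact hcol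

end CFCAux

theorem stmt_5 (n : ℕ) :
    cfcNum (SimpleGraph.pathGraph (n + 1)) = Nat.clog 2 (n + 1) := by
  have hmem : Nat.clog 2 (n + 1) ∈
      {k | ∃ c : Sym2 (Fin (n + 1)) → ℕ,
        (∀ e ∈ (SimpleGraph.pathGraph (n + 1)).edgeSet, c e < k) ∧
        IsCFConnected (SimpleGraph.pathGraph (n + 1)) c} :=
    ⟨CFCAux.pcol n, fun e he => CFCAux.pcol_lt n he, CFCAux.pcol_cfc n⟩
  have hlow : ∀ k ∈ {k | ∃ c : Sym2 (Fin (n + 1)) → ℕ,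
      (∀ e ∈ (SimpleGraph.pathGraph (n + 1)).edgeSet, c e < k) ∧
      IsCFConnected (SimpleGraph.pathGraph (n + 1)) c}, Nat.clog 2 (n + 1) ≤ k := by
    rintro k ⟨c, hc, hcf⟩
    rw [Nat.clog_le_iff_le_pow (by norm_num)]
    have hkey : n - 0 ≤ 2 ^ k - 1 := by
      apply CFCAux.interval_bound k (fun i => c (CFCAux.edg n i)) (Finset.range k)
        (by simp) 0 n (Nat.zero_le n)
      · intro i _ hi
        rw [Finset.mem_range]
        exact hc _ (CFCAux.edg_mem n hi)
      · intro a b _ hab hbn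
        have hune : CFCAux.vtx n a ≠ CFCAux.vtx n b := by
          intro h
          have h1 : (CFCAux.vtx n a).val = a := CFCAux.vtx_val n (by omega)
          have h2 : (CFCAux.vtx n b).val = b := CFCAux.vtx_val n (by omega)
          rw [h] at h1
          omega
        obtain ⟨p, hp, col, hcol⟩ := hcf _ _ hune
        refine ⟨col, ?_⟩
        have hedges := CFCAux.path_edges_eq n p hp (by
          rw [CFCAux.vtx_val n (by omega), CFCAux.vtx_val n (by omega)]
          omega)
        rw [hedges, CFCAux.vtx_val n (by omega), CFCAux.vtx_val n (by omega),
          List.filter_map, List.length_map] at hcol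
        exact hcol
    have h1 : 1 ≤ 2 ^ k := Nat.one_le_two_pow
    omega
  have hne : {k | ∃ c : Sym2 (Fin (n + 1)) → ℕ,
      (∀ e ∈ (SimpleGraph.pathGraph (n + 1)).edgeSet, c e < k) ∧
      IsCFConnected (SimpleGraph.pathGraph (n + 1)) c}.Nonempty := ⟨_, hmem⟩
  exact le_antisymm (Nat.sInf_le hmem) (hlow _ (Nat.sInf_mem hne))
end

section
/- If G is a connected edge-colored graph using two colors that is conflict-free connected, then the subgraph C(G) of G induced by the set of cut edges of G is a linear forest in which every component has at most three edges. -/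
open SimpleGraph

-- first edge forcing lemma
lemma firstEdge {V : Type*} {G : SimpleGraph V} {x y v : V} (p : G.Walk x y) (hp : p.IsPath)
    (hv : s(x,v) ∈ p.edges) : ∃ (h : G.Adj x v) (q : G.Walk v y), p = Walk.cons h q ∧ q.IsPath := by
  cases p with
  | nil => simp at hv
  | cons h' q =>
    rename_i w
    rw [Walk.cons_isPath_iff] at hp
    rw [Walk.edges_cons, List.mem_cons] at hv
    rcases hv with hv | hv
    · rw [Sym2.eq_iff] at hv
      rcases hv with ⟨_, rfl⟩ | ⟨hxw, _⟩
      · exact ⟨h', q, rfl, hp.1⟩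
      · exact absurd hxw h'.ne
    · exact absurd (q.fst_mem_support_of_mem_edges hv) hp.2

-- bridge must be on any walk between separated vertices
lemma bridgeForced {V : Type*} {G : SimpleGraph V} {s t a b : V}
    (hbr : G.IsBridge s(s,t)) (p : G.Walk a b) (w1 : G.Walk s a) (w2 : G.Walk b t)
    (h1 : s(s,t) ∉ w1.edges) (h2 : s(s,t) ∉ w2.edges) : s(s,t) ∈ p.edges := by
  rw [isBridge_iff_adj_and_forall_walk_mem_edges] at hbr
  have := hbr (w1.append (p.append w2))
  simp only [Walk.edges_append, List.mem_append] at this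
  tauto

-- two bridges sharing a vertex get different colors
lemma adjBridges {V : Type*} {G : SimpleGraph V} {c : Sym2 V → ℕ}
    (h : IsCFConnected G c) {v x y : V} (hxy : x ≠ y)
    (ha : G.IsBridge s(v,x)) (hb : G.IsBridge s(v,y)) : c s(v,x) ≠ c s(v,y) := by
  have hav : G.Adj v x := ha.reachable_iff_adj.mp (by obtain ⟨p, -⟩ := h v x (by rintro rfl; exact isBridge_iff.mp ha (Reachable.refl _)); exact p.reachable)
  have hbv : G.Adj v y := hb.reachable_iff_adj.mp (by obtain ⟨p, -⟩ := h v y (by rintro rfl; exact isBridge_iff.mp hb (Reachable.refl _)); exact p.reachable)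
  obtain ⟨p, hp, col, hcol⟩ := h x y hxy
  have ha' : G.IsBridge s(x,v) := by rwa [Sym2.eq_swap]
  have hxv : s(x,v) ∈ p.edges := by
    refine bridgeForced ha' p Walk.nil (Walk.cons hbv.symm Walk.nil) (by simp) ?_
    simp only [Walk.edges_cons, Walk.edges_nil, List.mem_singleton]
    intro hcontra
    rw [Sym2.eq_iff] at hcontra
    rcases hcontra with ⟨h1, _⟩ | ⟨h1, _⟩
    · exact hxy h1
    · exact hav.ne h1.symm
  have hvy : s(v,y) ∈ p.edges := by
    refine bridgeForced hb p (Walk.cons hav Walk.nil) Walk.nil ?_ (by simp)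
    simp only [Walk.edges_cons, Walk.edges_nil, List.mem_singleton]
    intro hcontra
    rw [Sym2.eq_iff] at hcontra
    rcases hcontra with ⟨_, rfl⟩ | ⟨hvx, _⟩
    · exact hxy rfl
    · exact hav.ne hvx
  obtain ⟨h1, q, rfl, hq⟩ := firstEdge p hp hxv
  have hvy' : s(v,y) ∈ q.edges := by
    rw [Walk.edges_cons, List.mem_cons] at hvy
    rcases hvy with hvy | hvy
    · rw [Sym2.eq_iff] at hvy
      rcases hvy with ⟨rfl, _⟩ | ⟨_, rfl⟩
      · exact absurd rfl hav.ne
      · exact absurd rfl hxy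
    · exact hvy
  obtain ⟨h2, r, rfl, hr⟩ := firstEdge q hq hvy'
  have : r = Walk.nil := (Walk.isPath_iff_eq_nil (p := r)).mp hr
  subst this
  simp only [Walk.edges_cons, Walk.edges_nil] at hcol
  intro heq
  have heq' : c s(x,v) = c s(v,y) := by rw [Sym2.eq_swap]; exact heq
  by_cases hc1 : c s(x,v) = col <;> by_cases hc2 : c s(v,y) = col <;>
    simp [List.filter, hc1, hc2] at hcol <;> omega

lemma bridgeGraph_adj {V : Type*} {G : SimpleGraph V} {u v : V} :
    (bridgeGraph G).Adj u v ↔ G.IsBridge s(u,v) := by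
  rw [bridgeGraph, fromEdgeSet_adj, Set.mem_setOf_eq]
  exact ⟨fun h => h.1, fun h => ⟨h, by rintro rfl; exact isBridge_iff.mp h (Reachable.refl _)⟩⟩

theorem stmt_6 {V : Type*} [Fintype V] (G : SimpleGraph V) (hG : G.Connected)
    (c : Sym2 V → ℕ) (hc : ∀ e ∈ G.edgeSet, c e < 2) (h : IsCFConnected G c) :
    IsLinearForest (bridgeGraph G) ∧
      ∀ (u v : V) (p : (bridgeGraph G).Walk u v), p.IsPath → p.length ≤ 3 := by
  refine ⟨⟨?_, ?_⟩, ?_⟩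
  · -- acyclic
    intro v p hp
    have hsub : ∀ e ∈ p.edges, e ∈ G.edgeSet := by
      intro e he
      have h1 : e ∈ (bridgeGraph G).edgeSet := p.edges_subset_edgeSet he
      rw [bridgeGraph, edgeSet_fromEdgeSet] at h1
      cases e with | h a b => exact h1.1.reachable_iff_adj.mp (hG.preconnected _ _)
    have hc' : (p.transfer G hsub).IsCycle := hp.transfer hsub
    obtain ⟨e, he⟩ : ∃ e, e ∈ p.edges := by
      cases p with
      | nil => exact absurd rfl hp.ne_nil
      | cons h q => exact ⟨_, List.mem_cons_self⟩
    have hbr : G.IsBridge e := by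
      have h1 : e ∈ (bridgeGraph G).edgeSet := p.edges_subset_edgeSet he
      rw [bridgeGraph, edgeSet_fromEdgeSet] at h1
      exact h1.1
    have := (isBridge_iff_mem_and_forall_cycle_notMem (hsub e he)).mp hbr (p.transfer G hsub) hc'
    rw [Walk.edges_transfer] at this
    exact this he
  · -- degree ≤ 2
    intro v
    by_contra hdeg
    push_neg at hdeg
    rw [Set.two_lt_ncard (Set.toFinite _)] at hdeg
    obtain ⟨x, hx, y, hy, z, hz, hxy, hxz, hyz⟩ := hdeg
    rw [mem_neighborSet, bridgeGraph_adj] at hx hy hz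
    have dx : c s(v,x) ≠ c s(v,y) := adjBridges h hxy hx hy
    have dy : c s(v,x) ≠ c s(v,z) := adjBridges h hxz hx hz
    have dz : c s(v,y) ≠ c s(v,z) := adjBridges h hyz hy hz
    have lx : c s(v,x) < 2 := hc _ ((G.mem_edgeSet).mpr (hx.reachable_iff_adj.mp (hG.preconnected _ _)))
    have ly : c s(v,y) < 2 := hc _ ((G.mem_edgeSet).mpr (hy.reachable_iff_adj.mp (hG.preconnected _ _)))
    have lz : c s(v,z) < 2 := hc _ ((G.mem_edgeSet).mpr (hz.reachable_iff_adj.mp (hG.preconnected _ _)))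
    omega
  · -- path length ≤ 3
    intro u v p hp
    by_contra hlen
    push_neg at hlen
    cases p with
    | nil => simp only [Walk.length_nil] at hlen; omega
    | cons h1 p =>
    rename_i v1
    cases p with
    | nil => simp only [Walk.length_cons, Walk.length_nil] at hlen; omega
    | cons h2 p =>
    rename_i v2
    cases p with
    | nil => simp only [Walk.length_cons, Walk.length_nil] at hlen; omega
    | cons h3 p =>
    rename_i v3
    cases p with
    | nil => simp only [Walk.length_cons, Walk.length_nil] at hlen; omega
    | cons h4 q =>
    rename_i v4
    clear hlen
    have b1 : G.IsBridge s(u,v1) := bridgeGraph_adj.mp h1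
    have b2 : G.IsBridge s(v1,v2) := bridgeGraph_adj.mp h2
    have b3 : G.IsBridge s(v2,v3) := bridgeGraph_adj.mp h3
    have b4 : G.IsBridge s(v3,v4) := bridgeGraph_adj.mp h4
    have g1 : G.Adj u v1 := (b1.reachable_iff_adj.mp (hG.preconnected _ _))
    have g2 : G.Adj v1 v2 := (b2.reachable_iff_adj.mp (hG.preconnected _ _))
    have g3 : G.Adj v2 v3 := (b3.reachable_iff_adj.mp (hG.preconnected _ _))
    have g4 : G.Adj v3 v4 := (b4.reachable_iff_adj.mp (hG.preconnected _ _))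
    simp only [Walk.cons_isPath_iff, Walk.support_cons, List.mem_cons, not_or] at hp
    obtain ⟨⟨⟨⟨hq, h3q⟩, h23, h2q⟩, h12, h13, h1q⟩, h01, h02, h03, h0q⟩ := hp
    have hv4 : v4 ∈ q.support := q.start_mem_support
    have h04 : u ≠ v4 := fun e => h0q (e ▸ hv4)
    have h14 : v1 ≠ v4 := fun e => h1q (e ▸ hv4)
    have h24 : v2 ≠ v4 := fun e => h2q (e ▸ hv4)
    have h34 : v3 ≠ v4 := fun e => h3q (e ▸ hv4)
    have h10 := Ne.symm h01; have h20 := Ne.symm h02; have h30 := Ne.symm h03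
    have h40 := Ne.symm h04; have h21 := Ne.symm h12; have h31 := Ne.symm h13
    have h41 := Ne.symm h14; have h32 := Ne.symm h23; have h42 := Ne.symm h24
    have h43 := Ne.symm h34
    obtain ⟨P, hP, col, hcol⟩ := h u v4 h04
    have m1 : s(u,v1) ∈ P.edges := by
      refine bridgeForced b1 P Walk.nil
        (Walk.cons g4.symm (Walk.cons g3.symm (Walk.cons g2.symm Walk.nil))) (by simp) ?_
      simp only [Walk.edges_cons, Walk.edges_nil, List.mem_cons, List.not_mem_nil, or_false,
        Sym2.eq_iff, not_or]
      tauto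
    have m2 : s(v1,v2) ∈ P.edges := by
      refine bridgeForced b2 P (Walk.cons g1.symm Walk.nil)
        (Walk.cons g4.symm (Walk.cons g3.symm Walk.nil)) ?_ ?_ <;>
      · simp only [Walk.edges_cons, Walk.edges_nil, List.mem_cons, List.not_mem_nil, or_false,
          Sym2.eq_iff, not_or]
        tauto
    have m3 : s(v2,v3) ∈ P.edges := by
      refine bridgeForced b3 P (Walk.cons g2.symm (Walk.cons g1.symm Walk.nil))
        (Walk.cons g4.symm Walk.nil) ?_ ?_ <;>
      · simp only [Walk.edges_cons, Walk.edges_nil, List.mem_cons, List.not_mem_nil, or_false,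
          Sym2.eq_iff, not_or]
        tauto
    have m4 : s(v3,v4) ∈ P.edges := by
      refine bridgeForced b4 P
        (Walk.cons g3.symm (Walk.cons g2.symm (Walk.cons g1.symm Walk.nil))) Walk.nil ?_ (by simp)
      simp only [Walk.edges_cons, Walk.edges_nil, List.mem_cons, List.not_mem_nil, or_false,
        Sym2.eq_iff, not_or]
      tauto
    obtain ⟨a1, Q1, rfl, hQ1⟩ := firstEdge P hP m1
    have m2' : s(v1,v2) ∈ Q1.edges := by
      rw [Walk.edges_cons, List.mem_cons] at m2
      rcases m2 with m2 | m2
      · rw [Sym2.eq_iff] at m2; tauto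
      · exact m2
    obtain ⟨a2, Q2, rfl, hQ2⟩ := firstEdge Q1 hQ1 m2'
    have m3' : s(v2,v3) ∈ Q2.edges := by
      simp only [Walk.edges_cons, List.mem_cons, Sym2.eq_iff] at m3
      rcases m3 with m3 | m3 | m3
      · tauto
      · tauto
      · exact m3
    obtain ⟨a3, Q3, rfl, hQ3⟩ := firstEdge Q2 hQ2 m3'
    have m4' : s(v3,v4) ∈ Q3.edges := by
      simp only [Walk.edges_cons, List.mem_cons, Sym2.eq_iff] at m4
      rcases m4 with m4 | m4 | m4 | m4
      · tauto
      · tauto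
      · tauto
      · exact m4
    obtain ⟨a4, Q4, rfl, hQ4⟩ := firstEdge Q3 hQ3 m4'
    have : Q4 = Walk.nil := (Walk.isPath_iff_eq_nil (p := Q4)).mp hQ4
    subst this
    have b1' : G.IsBridge s(v1,u) := by rwa [Sym2.eq_swap]
    have b2' : G.IsBridge s(v2,v1) := by rwa [Sym2.eq_swap]
    have b3' : G.IsBridge s(v3,v2) := by rwa [Sym2.eq_swap]
    have d12 : c s(v1,u) ≠ c s(v1,v2) := adjBridges h h02 b1' b2
    have d23 : c s(v2,v1) ≠ c s(v2,v3) := adjBridges h h13 b2' b3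
    have d34 : c s(v3,v2) ≠ c s(v3,v4) := adjBridges h h24 b3' b4
    have sw1 : c s(v1,u) = c s(u,v1) := by rw [Sym2.eq_swap]
    have sw2 : c s(v2,v1) = c s(v1,v2) := by rw [Sym2.eq_swap]
    have sw3 : c s(v3,v2) = c s(v2,v3) := by rw [Sym2.eq_swap]
    have L1 : c s(u,v1) < 2 := hc _ ((G.mem_edgeSet).mpr g1)
    have L2 : c s(v1,v2) < 2 := hc _ ((G.mem_edgeSet).mpr g2)
    have L3 : c s(v2,v3) < 2 := hc _ ((G.mem_edgeSet).mpr g3)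
    have L4 : c s(v3,v4) < 2 := hc _ ((G.mem_edgeSet).mpr g4)
    have k3 : c s(v2,v3) = c s(u,v1) := by omega
    have k4 : c s(v3,v4) = c s(v1,v2) := by omega
    simp only [Walk.edges_cons, Walk.edges_nil] at hcol
    by_cases kc1 : c s(u,v1) = col <;> by_cases kc2 : c s(v1,v2) = col <;>
      simp [List.filter, kc1, kc2, k3, k4] at hcol <;> omega
end

section
/- If G is a 2-edge-connected non-complete graph, then cfc(G) = 2. -/
open SimpleGraph

section Aux

variable {V : Type*}

lemma reach_del_full {H : SimpleGraph V} {x y : V}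
    (hxy : (H.deleteEdges {s(x,y)}).Reachable x y) {a b : V} (W : H.Walk a b) :
    (H.deleteEdges {s(x,y)}).Reachable a b := by
  induction W with
  | nil => exact Reachable.refl _
  | @cons a c b h p ih =>
    by_cases he : s(a, c) = s(x, y)
    · rw [Sym2.eq_iff] at he
      rcases he with ⟨rfl, rfl⟩ | ⟨rfl, rfl⟩
      · exact hxy.trans ih
      · exact hxy.symm.trans ih
    · have hadj : (H.deleteEdges {s(x,y)}).Adj a c := by
        rw [SimpleGraph.deleteEdges_adj]
        exact ⟨h, by simpa using he⟩
      exact hadj.reachable.trans ih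

lemma reach_del_or {H : SimpleGraph V} {x y : V} {a b : V} (W : H.Walk a b) :
    (H.deleteEdges {s(x,y)}).Reachable a b ∨ (H.deleteEdges {s(x,y)}).Reachable a x ∨
      (H.deleteEdges {s(x,y)}).Reachable a y := by
  induction W with
  | nil => exact Or.inl (Reachable.refl _)
  | @cons a c b h p ih =>
    by_cases he : s(a, c) = s(x, y)
    · rw [Sym2.eq_iff] at he
      rcases he with ⟨rfl, rfl⟩ | ⟨rfl, rfl⟩
      · exact Or.inr (Or.inl (Reachable.refl _))
      · exact Or.inr (Or.inr (Reachable.refl _))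
    · have hadj : (H.deleteEdges {s(x,y)}).Adj a c := by
        rw [SimpleGraph.deleteEdges_adj]
        exact ⟨h, by simpa using he⟩
      rcases ih with h1 | h1 | h1
      · exact Or.inl (hadj.reachable.trans h1)
      · exact Or.inr (Or.inl (hadj.reachable.trans h1))
      · exact Or.inr (Or.inr (hadj.reachable.trans h1))

lemma exists_spanning_tree [Finite V] :
    ∀ (n : ℕ) (G : SimpleGraph V), G.edgeSet.ncard = n → G.Connected →
      ∃ T, T ≤ G ∧ T.Connected ∧ T.IsAcyclic := by
  intro n
  induction n using Nat.strong_induction_on with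
  | _ n ih =>
    intro G hn hc
    by_cases ha : G.IsAcyclic
    · exact ⟨G, le_refl G, hc, ha⟩
    · rw [isAcyclic_iff_forall_edge_isBridge] at ha
      push_neg at ha
      obtain ⟨e, he, hbr⟩ := ha
      induction e with
      | h x y =>
        have hadj : G.Adj x y := he
        have hre : (G.deleteEdges {s(x,y)}).Reachable x y := by
          by_contra hcon
          exact hbr (isBridge_iff.2 hcon)
        have hc' : (G.deleteEdges {s(x,y)}).Connected := by
          rw [SimpleGraph.connected_iff]
          refine ⟨fun a b => ?_, hc.nonempty⟩
          obtain ⟨W⟩ := hc.preconnected a b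
          exact reach_del_full hre W
        have hcard : (G.deleteEdges {s(x,y)}).edgeSet.ncard < n := by
          rw [SimpleGraph.edgeSet_deleteEdges, ← hn]
          exact Set.ncard_lt_ncard (Set.sdiff_singleton_ssubset.2 he) (Set.toFinite _)
        obtain ⟨T, hT, h1, h2⟩ := ih _ hcard _ rfl hc'
        exact ⟨T, hT.trans (SimpleGraph.deleteEdges_le _), h1, h2⟩

lemma tree_not_reach {T : SimpleGraph V} (hT : T.IsTree) {a b : V} (p : T.Walk a b)
    (hp : p.IsPath) {e : Sym2 V} (he : e ∈ p.edges) :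
    ¬(T.deleteEdges {e}).Reachable a b := by
  classical
  rintro ⟨q0⟩
  obtain ⟨q, hq⟩ := q0.toPath
  have hsub : ∀ e' ∈ q.edges, e' ∈ T.edgeSet := fun e' he' =>
    SimpleGraph.edgeSet_mono (SimpleGraph.deleteEdges_le _) (q.edges_subset_edgeSet he')
  have huniq := (hT.existsUnique_path a b).unique (hq.transfer hsub) hp
  have : e ∈ q.edges := by
    rw [← SimpleGraph.Walk.edges_transfer q hsub, huniq]
    exact he
  have := q.edges_subset_edgeSet this
  rw [SimpleGraph.edgeSet_deleteEdges] at this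
  exact this.2 rfl

end Aux

theorem stmt_8 {V : Type*} [Fintype V] (G : SimpleGraph V)
    (hconn : G.Connected) (hcard : 2 ≤ Fintype.card V)
    (hbridge : ∀ e : Sym2 V, ¬G.IsBridge e) (hnc : G ≠ ⊤) :
    cfcNum G = 2 := by
  classical
  obtain ⟨T, hTG, hTc, hTa⟩ := exists_spanning_tree G.edgeSet.ncard G rfl hconn
  have hTree : T.IsTree := ⟨hTc, hTa⟩
  set c : Sym2 V → ℕ := fun e => if e ∈ T.edgeSet then 0 else 1 with hcdef
  have hcf : IsCFConnected G c := by
    intro u v huv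
    by_cases hadj : G.Adj u v
    · refine ⟨Walk.cons hadj Walk.nil, ?_, c s(u,v), ?_⟩
      · simp [Walk.isPath_def, huv]
      · simp
    · obtain ⟨p0⟩ := hTc.preconnected u v
      obtain ⟨p, hp⟩ := p0.toPath
      cases p with
      | nil => exact absurd rfl huv
      | @cons _ w _ h q =>
        set A : Set V := {z | (T.deleteEdges {s(u,w)}).Reachable u z} with hAdef
        have hGuw : G.Adj u w := hTG h
        have hre : (G.deleteEdges {s(u,w)}).Reachable u w := by
          by_contra hcon
          exact hbridge s(u,w) (isBridge_iff.2 hcon)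
        have hwA : w ∉ A :=
          tree_not_reach hTree (Walk.cons h Walk.nil)
            (by simp [Walk.isPath_def, h.ne]) (by simp)
        have hvA : v ∉ A := tree_not_reach hTree (Walk.cons h q) hp (by simp)
        have huA : u ∈ A := Reachable.refl _
        obtain ⟨W⟩ := hre
        obtain ⟨d, hd, hdx, hdy⟩ := W.exists_boundary_dart A huA hwA
        have hd' : G.Adj d.fst d.snd ∧ s(d.fst,d.snd) ∉ ({s(u,w)} : Set (Sym2 V)) := by
          have := d.adj
          rwa [SimpleGraph.deleteEdges_adj] at this
        have hxyT : s(d.fst,d.snd) ∉ T.edgeSet := by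
          intro hmem
          have : (T.deleteEdges {s(u,w)}).Adj d.fst d.snd :=
            SimpleGraph.deleteEdges_adj.2 ⟨hmem, hd'.2⟩
          exact hdy (Reachable.trans hdx this.reachable)
        have hnA : ∀ z, z ∉ A → (T.deleteEdges {s(u,w)}).Reachable z w := by
          intro z hz
          obtain ⟨Wz⟩ := hTc.preconnected z u
          rcases reach_del_or (x := u) (y := w) Wz with h1 | h1 | h1
          · exact absurd h1.symm hz
          · exact absurd h1.symm hz
          · exact h1
        have hyv : (T.deleteEdges {s(u,w)}).Reachable d.snd v :=
          (hnA d.snd hdy).trans (hnA v hvA).symm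
        obtain ⟨q10⟩ := hdx
        obtain ⟨q1, hq1⟩ := q10.toPath
        obtain ⟨q20⟩ := hyv
        obtain ⟨q2, hq2⟩ := q20.toPath
        have hs1 : ∀ e' ∈ q1.edges, e' ∈ T.edgeSet := fun e' he' =>
          SimpleGraph.edgeSet_mono (SimpleGraph.deleteEdges_le _) (q1.edges_subset_edgeSet he')
        have hs2 : ∀ e' ∈ q2.edges, e' ∈ T.edgeSet := fun e' he' =>
          SimpleGraph.edgeSet_mono (SimpleGraph.deleteEdges_le _) (q2.edges_subset_edgeSet he')
        have hs1G : ∀ e' ∈ q1.edges, e' ∈ G.edgeSet := fun e' he' =>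
          SimpleGraph.edgeSet_mono hTG (hs1 e' he')
        have hs2G : ∀ e' ∈ q2.edges, e' ∈ G.edgeSet := fun e' he' =>
          SimpleGraph.edgeSet_mono hTG (hs2 e' he')
        refine ⟨(q1.transfer G hs1G).append (Walk.cons hd'.1 (q2.transfer G hs2G)), ?_, 1, ?_⟩
        · rw [Walk.isPath_def, Walk.support_append, Walk.support_cons, List.tail_cons,
            Walk.support_transfer, Walk.support_transfer]
          refine List.Nodup.append hq1.support_nodup hq2.support_nodup ?_
          intro z hz1 hz2
          have hzA : (T.deleteEdges {s(u,w)}).Reachable u z := ⟨q1.takeUntil z hz1⟩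
          have hyz : (T.deleteEdges {s(u,w)}).Reachable d.snd z := ⟨q2.takeUntil z hz2⟩
          exact hdy (hzA.trans hyz.symm)
        · rw [Walk.edges_append, Walk.edges_cons, Walk.edges_transfer, Walk.edges_transfer,
            List.filter_append, List.filter_cons]
          have f1 : q1.edges.filter (fun e => decide (c e = 1)) = [] := by
            rw [List.filter_eq_nil_iff]
            intro e' he'
            simp [hcdef, hs1 e' he']
          have f2 : q2.edges.filter (fun e => decide (c e = 1)) = [] := by
            rw [List.filter_eq_nil_iff]
            intro e' he'
            simp [hcdef, hs2 e' he']
          have fc : c s(d.fst, d.snd) = 1 := by simp [hcdef, hxyT]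
          simp [f1, f2, fc]
  have h2mem : 2 ∈ {k | ∃ c : Sym2 V → ℕ, (∀ e ∈ G.edgeSet, c e < k) ∧ IsCFConnected G c} := by
    refine ⟨c, fun e he => ?_, hcf⟩
    by_cases h : e ∈ T.edgeSet <;> simp [hcdef, h]
  have hlow : ∀ k ∈ {k | ∃ c : Sym2 V → ℕ, (∀ e ∈ G.edgeSet, c e < k) ∧ IsCFConnected G c},
      2 ≤ k := by
    rintro k ⟨c', hlt, hcf'⟩
    by_contra hk
    have hexists : ∃ u v : V, u ≠ v ∧ ¬G.Adj u v := by
      by_contra hcontra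
      push_neg at hcontra
      exact hnc (le_antisymm le_top fun a b hab => hcontra a b hab.ne)
    obtain ⟨u, v, huv, hna⟩ := hexists
    obtain ⟨p, hp, col, hfilt⟩ := hcf' u v huv
    have hall : ∀ e ∈ p.edges, c' e = 0 := by
      intro e he
      have := hlt e (p.edges_subset_edgeSet he)
      omega
    by_cases hcol : col = 0
    · subst hcol
      have hfe : p.edges.filter (fun e => decide (c' e = 0)) = p.edges := by
        rw [List.filter_eq_self]
        intro e he
        simpa using hall e he
      rw [hfe] at hfilt
      have hlen : p.length = 1 := by rw [← Walk.length_edges]; exact hfilt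
      cases p with
      | nil => simp at hlen
      | cons h' q =>
        have hq0 : q.length = 0 := by simpa using hlen
        exact hna ((Walk.eq_of_length_eq_zero hq0) ▸ h')
    · have hfe : p.edges.filter (fun e => decide (c' e = col)) = [] := by
        rw [List.filter_eq_nil_iff]
        intro e he
        simp [hall e he, Ne.symm hcol]
      rw [hfe] at hfilt
      simp at hfilt
  exact le_antisymm (Nat.sInf_le h2mem) (le_csInf ⟨2, h2mem⟩ hlow)
end
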